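/- arXiv:1102.5441 — 6 statements merged into one kernel-verified Lean document; each statement's English description precedes it below -/
import Mathlib

section
/- A finite simple graph G has a 2-coloring of cost at most k if and only if there exists a set S of at most k edges of G such that the graph G/S obtained from G by contracting the edges of S is bipartite. -/
open scoped Classical

variable {V : Type*}

/-- The spanning subgraph of `G` whose edges are the *bad* edges w.r.t. the
2-coloring `φ` (edges whose endpoints get the same color). -/
def badGraph (G : SimpleGraph V) (φ : V → Fin 2) : SimpleGraph V where
  Adj u v := G.Adj u v ∧ φ u = φ v
  symm := ⟨fun u v h => ⟨h.1.symm, h.2.symm⟩⟩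
  loopless := ⟨fun v h => G.loopless.irrefl v h.1⟩

/-- The spanning subgraph of `G` whose edges are the *good* edges w.r.t. the
2-coloring `φ` (edges whose endpoints get different colors). -/
def goodGraph (G : SimpleGraph V) (φ : V → Fin 2) : SimpleGraph V where
  Adj u v := G.Adj u v ∧ φ u ≠ φ v
  symm := ⟨fun u v h => ⟨h.1.symm, Ne.symm h.2⟩⟩
  loopless := ⟨fun v h => G.loopless.irrefl v h.1⟩

/-- `X` is a monochromatic component of the 2-coloring `φ` of `G`: the vertex set of a
connected component of the subgraph of `G` induced by one of the two color classes. -/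
def IsMonochromaticComponent (G : SimpleGraph V) (φ : V → Fin 2) (X : Set V) : Prop :=
  ∃ (i : Fin 2) (c : (SimpleGraph.induce (φ ⁻¹' {i}) G).ConnectedComponent),
    X = Subtype.val '' c.supp

/-- `X` is a good component of the 2-coloring `φ` of `G`: the vertex set of a connected
component of the spanning subgraph of `G` consisting of the good edges. -/
def IsGoodComponent (G : SimpleGraph V) (φ : V → Fin 2) (X : Set V) : Prop :=
  ∃ c : (goodGraph G φ).ConnectedComponent, X = c.supp

/-- The cost of a 2-coloring `φ` of `G`: the sum, over all monochromatic components `X`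
of `φ`, of `|X| - 1`. -/
noncomputable def cost (G : SimpleGraph V) (φ : V → Fin 2) : ℕ :=
  ∑ᶠ X ∈ {X : Set V | IsMonochromaticComponent G φ X}, (Nat.card X - 1)

/-- A 2-coloring is a `(T₁,T₂)`-extension if it colors every vertex of `T₁` with the first
color and every vertex of `T₂` with the second color. -/
def IsExtension (φ : V → Fin 2) (T1 T2 : Set V) : Prop :=
  (∀ x ∈ T1, φ x = 0) ∧ (∀ x ∈ T2, φ x = 1)

/-- A cheapest `(T₁,T₂)`-extension of `G`: no `(T₁,T₂)`-extension has strictly smaller cost. -/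
noncomputable def IsCheapestExtension (G : SimpleGraph V) (φ : V → Fin 2)
    (T1 T2 : Set V) : Prop :=
  IsExtension φ T1 T2 ∧ ∀ ψ : V → Fin 2, IsExtension ψ T1 T2 → cost G φ ≤ cost G ψ

/-- `X` is `p`-connected in `G`: `|X| ≥ p` and for all subsets `X₁, X₂ ⊆ X` with
`|X₁| = |X₂| ≤ p` there are `|X₁|` pairwise vertex-disjoint paths in `G`, each with one
endpoint in `X₁` and the other endpoint in `X₂`. -/
def PConnected (G : SimpleGraph V) (p : ℕ) (X : Set V) : Prop :=
  p ≤ Nat.card X ∧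
  ∀ X1 X2 : Finset V, ↑X1 ⊆ X → ↑X2 ⊆ X → X1.card = X2.card → X1.card ≤ p →
    ∃ (a b : Fin X1.card → V) (w : ∀ i, G.Walk (a i) (b i)),
      (∀ i, (w i).IsPath) ∧ (∀ i, a i ∈ X1) ∧ (∀ i, b i ∈ X2) ∧
      ∀ i j, i ≠ j → ∀ x, x ∈ (w i).support → x ∉ (w j).support

/-- `X` is well-connected in `G` if it is `(|X|/2)`-connected. -/
def WellConnected (G : SimpleGraph V) (X : Set V) : Prop :=
  PConnected G (Nat.card X / 2) X

/-- `d_G(X)`: the number of edges of `G` with exactly one endpoint in `X`. -/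
noncomputable def cutCard (G : SimpleGraph V) (X : Set V) : ℕ :=
  Nat.card {e : Sym2 V | e ∈ G.edgeSet ∧ ∃ a b, e = s(a, b) ∧ a ∈ X ∧ b ∉ X}

/-- `X` is an `(x,y)`-important set in `G`. -/
noncomputable def ImportantSet (G : SimpleGraph V) (x y : V) (X : Set V) : Prop :=
  x ∈ X ∧ y ∉ X ∧ (SimpleGraph.induce X G).Connected ∧
  ¬ ∃ X' : Set V, X ⊂ X' ∧ y ∉ X' ∧ (SimpleGraph.induce X' G).Connected ∧
      cutCard G X' ≤ cutCard G X

/-- `G` has a tree decomposition of width at most `w`. -/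
def HasTreewidthAtMost (G : SimpleGraph V) (w : ℕ) : Prop :=
  ∃ (n : ℕ) (T : SimpleGraph (Fin n)) (bag : Fin n → Finset V),
    T.IsTree ∧
    (∀ v : V, ∃ i, v ∈ bag i) ∧
    (∀ u v : V, G.Adj u v → ∃ i, u ∈ bag i ∧ v ∈ bag i) ∧
    (∀ v : V, (SimpleGraph.induce {i | v ∈ bag i} T).Connected) ∧
    (∀ i, (bag i).card ≤ w + 1)

/-- The treewidth of `G`: the minimum width over all tree decompositions of `G`. -/
noncomputable def treewidth (G : SimpleGraph V) : ℕ :=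
  sInf {w | HasTreewidthAtMost G w}

/-- The graph `G/S` obtained from `G` by contracting the edges of `S`: its vertices are the
connected components of the graph `(V(G), S)`, two distinct components being adjacent iff
`G` has an edge with one endpoint in each of them. -/
def contractEdges (G : SimpleGraph V) (S : Set (Sym2 V)) :
    SimpleGraph (SimpleGraph.fromEdgeSet S).ConnectedComponent where
  Adj c d := c ≠ d ∧ ∃ u v : V, G.Adj u v ∧
      (SimpleGraph.fromEdgeSet S).connectedComponentMk u = c ∧
      (SimpleGraph.fromEdgeSet S).connectedComponentMk v = d
  symm := by
    constructor
    rintro c d ⟨hcd, u, v, ha, hu, hv⟩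
    exact ⟨hcd.symm, v, u, ha.symm, hv, hu⟩
  loopless := ⟨fun c h => h.1 rfl⟩

/-- The graph `G*` obtained from `G` by adding a new vertex (here `none`) adjacent to
exactly the vertices of `Y`. -/
def addApex (G : SimpleGraph V) (Y : Set V) : SimpleGraph (Option V) :=
  SimpleGraph.fromRel (fun a b =>
    (∃ u v : V, a = some u ∧ b = some v ∧ G.Adj u v) ∨
    (∃ u : V, a = some u ∧ b = none ∧ u ∈ Y))

/-- The set `Z`: the union, over all `x ∈ T`, of all `(x, y*)`-important sets `X` in
`G* = addApex G Y` with `d_{G*}(X) ≤ p`. -/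
noncomputable def importantUnion (G : SimpleGraph V) (Y : Set V) (T : Set V) (p : ℕ) :
    Set (Option V) :=
  {w | ∃ x ∈ T, ∃ X : Set (Option V),
    ImportantSet (addApex G Y) (some x) none X ∧ cutCard (addApex G Y) X ≤ p ∧ w ∈ X}

section MyHelpers

open SimpleGraph

variable {V : Type*}

/-- If every edge of `H` joins `K`-reachable vertices, then `H`-reachability implies
`K`-reachability. -/
lemma myReachTrans {H K : SimpleGraph V}
    (h : ∀ u v, H.Adj u v → K.Reachable u v) {u v : V} (hr : H.Reachable u v) :
    K.Reachable u v := by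
  obtain ⟨w⟩ := hr
  induction w with
  | nil => exact Reachable.refl _
  | cons ha _ ih => exact (h _ _ ha).trans ih

/-- Removing one edge: reachability case analysis. -/
lemma myReachCases {H K : SimpleGraph V} {a b : V}
    (hHK : ∀ u v, H.Adj u v → K.Adj u v ∨ s(u, v) = s(a, b)) {u v : V}
    (hr : H.Reachable u v) :
    K.Reachable u v ∨ (K.Reachable u a ∧ K.Reachable v b) ∨
      (K.Reachable u b ∧ K.Reachable v a) := by
  obtain ⟨w⟩ := hr
  induction w with
  | nil => exact Or.inl (Reachable.refl _)
  | @cons u x v ha p ih =>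
    rcases hHK _ _ ha with hK | he
    · rcases ih with h1 | ⟨h1, h2⟩ | ⟨h1, h2⟩
      · exact Or.inl (hK.reachable.trans h1)
      · exact Or.inr (Or.inl ⟨hK.reachable.trans h1, h2⟩)
      · exact Or.inr (Or.inr ⟨hK.reachable.trans h1, h2⟩)
    · rw [Sym2.eq_iff] at he
      rcases he with ⟨rfl, rfl⟩ | ⟨rfl, rfl⟩
      · rcases ih with h1 | ⟨h1, h2⟩ | ⟨h1, h2⟩
        · exact Or.inr (Or.inl ⟨Reachable.refl _, h1.symm⟩)
        · exact Or.inl (h1.symm.trans h2.symm)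
        · exact Or.inl h2.symm
      · rcases ih with h1 | ⟨h1, h2⟩ | ⟨h1, h2⟩
        · exact Or.inr (Or.inr ⟨Reachable.refl _, h1.symm⟩)
        · exact Or.inl h2.symm
        · exact Or.inl (h1.symm.trans h2.symm)

lemma myCCsurj (H : SimpleGraph V) : Function.Surjective H.connectedComponentMk :=
  fun c => c.exists_rep

end MyHelpers

section MyCount
open SimpleGraph Finset

variable {V : Type*}

lemma myCardLt {α β : Type*} [Finite α] (f : α → β) (hs : Function.Surjective f)
    (hni : ¬ Function.Injective f) : Nat.card β < Nat.card α := by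
  haveI := Fintype.ofFinite α
  haveI := Fintype.ofSurjective f hs
  simpa only [Nat.card_eq_fintype_card] using
    Fintype.card_lt_of_surjective_not_injective f hs hni

lemma myEdgeFinsetDelete [Fintype V] (H : SimpleGraph V) {e : Sym2 V}
    (he : e ∈ H.edgeFinset) :
    (H.deleteEdges {e}).edgeFinset.card = H.edgeFinset.card - 1 := by
  have h : (H.deleteEdges {e}).edgeFinset = H.edgeFinset.erase e := by
    ext f
    simp only [mem_edgeFinset, edgeSet_deleteEdges, Set.mem_diff, Set.mem_singleton_iff,
      Finset.mem_erase, and_comm]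
  rw [h, Finset.card_erase_of_mem he]

lemma myAdjCases (H : SimpleGraph V) (a b : V) :
    ∀ u v, H.Adj u v → (H.deleteEdges {s(a,b)}).Adj u v ∨ s(u, v) = s(a, b) := by
  intro u v h
  by_cases hc : s(u, v) = s(a, b)
  · exact Or.inr hc
  · exact Or.inl (by simp [deleteEdges_adj, h, hc])

lemma myEdgeSetEmpty [Fintype V] {H : SimpleGraph V} (hn : H.edgeFinset.card = 0) :
    H = ⊥ := by
  rw [← edgeSet_eq_empty, ← Set.toFinset_eq_empty]
  exact Finset.card_eq_zero.mp hn

/-- Key counting lemma (L1): `|V| ≤ |E(H)| + #components(H)`. -/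
lemma myCardLe [Fintype V] :
    ∀ (n : ℕ) (H : SimpleGraph V), H.edgeFinset.card = n →
      Nat.card V ≤ n + Nat.card H.ConnectedComponent := by
  intro n
  induction n with
  | zero =>
    intro H hn
    have hbot : H = ⊥ := myEdgeSetEmpty hn
    subst hbot
    have hinj : Function.Injective (SimpleGraph.connectedComponentMk (⊥ : SimpleGraph V)) := by
      intro u v huv
      have := ConnectedComponent.exact huv
      rwa [reachable_bot] at this
    simpa using Nat.card_le_card_of_injective _ hinj
  | succ n ih =>
    intro H hn
    obtain ⟨e, he⟩ : H.edgeFinset.Nonempty := Finset.card_pos.mp (by omega)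
    obtain ⟨⟨a, b⟩, rfl⟩ := Quot.exists_rep e
    have hab : H.Adj a b := mem_edgeFinset.mp he
    set H' := H.deleteEdges {s(a, b)} with hH'
    have h'card : H'.edgeFinset.card = n := by
      have h0 := myEdgeFinsetDelete H he; rw [hn] at h0; simpa using h0
    have key : ∀ u v : V, H.connectedComponentMk u = H.connectedComponentMk v →
        H'.connectedComponentMk u ≠ H'.connectedComponentMk b →
        H'.connectedComponentMk v ≠ H'.connectedComponentMk b →
        H'.connectedComponentMk u = H'.connectedComponentMk v := by
      intro u v huv hu hv
      rcases myReachCases (myAdjCases H a b) (ConnectedComponent.exact huv) with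
        h1 | ⟨h1, h2⟩ | ⟨h1, h2⟩
      · exact ConnectedComponent.sound h1
      · exact absurd (ConnectedComponent.sound h2) hv
      · exact absurd (ConnectedComponent.sound h1) hu
    set f : H'.ConnectedComponent → Option H.ConnectedComponent := fun c =>
      if c = H'.connectedComponentMk b then none
      else some (c.map (Hom.ofLE (deleteEdges_le _))) with hf
    have hinj : Function.Injective f := by
      intro c d h
      by_cases hc : c = H'.connectedComponentMk b <;>
        by_cases hd : d = H'.connectedComponentMk b
      · rw [hc, hd]
      · simp only [hf, if_pos hc, if_neg hd] at h; exact absurd h (by simp)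
      · simp only [hf, if_neg hc, if_pos hd] at h; exact absurd h (by simp)
      · simp only [hf, if_neg hc, if_neg hd, Option.some.injEq] at h
        revert hc hd h
        refine ConnectedComponent.ind₂ ?_ c d
        intro u v hc hd h
        exact key u v h hc hd
    have hle : Nat.card H'.ConnectedComponent ≤ Nat.card H.ConnectedComponent + 1 := by
      calc Nat.card H'.ConnectedComponent
          ≤ Nat.card (Option H.ConnectedComponent) := Nat.card_le_card_of_injective f hinj
        _ = Nat.card H.ConnectedComponent + 1 := Finite.card_option
    have := ih H' (by convert h'card)
    omega

end MyCount

section MySpan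
open SimpleGraph Finset

variable {V : Type*}

/-- L2': every graph has an edge set `S` spanning the same reachability relation with
`|S| + #components ≤ |V|`. -/
lemma mySpanning [Fintype V] :
    ∀ (n : ℕ) (H : SimpleGraph V), H.edgeFinset.card = n →
      ∃ S : Finset (Sym2 V), ↑S ⊆ H.edgeSet ∧
        S.card + Nat.card (SimpleGraph.fromEdgeSet (↑S : Set (Sym2 V))).ConnectedComponent
          ≤ Nat.card V ∧
        ∀ u v : V, (SimpleGraph.fromEdgeSet (↑S : Set (Sym2 V))).Reachable u v ↔
          H.Reachable u v := by
  intro n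
  induction n with
  | zero =>
    intro H hn
    have hbot : H = ⊥ := myEdgeSetEmpty hn
    subst hbot
    refine ⟨(∅ : Finset (Sym2 V)), by simp, ?_, ?_⟩
    · have hinj : Function.Injective
          (SimpleGraph.connectedComponentMk (fromEdgeSet ((↑(∅ : Finset (Sym2 V))) : Set (Sym2 V)))) := by
        intro u v huv
        have h2 := ConnectedComponent.exact huv
        rw [Finset.coe_empty, fromEdgeSet_empty, reachable_bot] at h2
        exact h2
      have hsurj := myCCsurj (fromEdgeSet (↑(∅ : Finset (Sym2 V)) : Set (Sym2 V)))
      have := Nat.card_le_card_of_surjective _ hsurj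
      simp only [Finset.card_empty]
      omega
    · intro u v
      rw [Finset.coe_empty, fromEdgeSet_empty]
  | succ n ih =>
    intro H hn
    obtain ⟨e, he⟩ : H.edgeFinset.Nonempty := Finset.card_pos.mp (by omega)
    obtain ⟨⟨a, b⟩, rfl⟩ := Quot.exists_rep e
    have hab : H.Adj a b := mem_edgeFinset.mp he
    set H' := H.deleteEdges {s(a, b)} with hH'
    have h'card : H'.edgeFinset.card = n := by
      have h0 := myEdgeFinsetDelete H he; rw [hn] at h0; simpa using h0
    have h'sub : H'.edgeSet ⊆ H.edgeSet := by
      rw [hH', edgeSet_deleteEdges]; exact Set.diff_subset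
    obtain ⟨S', hsub, hcard, hreach⟩ := ih H' (by convert h'card)
    by_cases hr : H'.Reachable a b
    · -- the edge is redundant
      have hiff : ∀ u v : V, H'.Reachable u v ↔ H.Reachable u v := by
        intro u v
        constructor
        · exact fun h => h.mono (deleteEdges_le _)
        · refine myReachTrans (fun u v huv => ?_)
          rcases myAdjCases H a b u v huv with h1 | h1
          · exact h1.reachable
          · rw [Sym2.eq_iff] at h1
            rcases h1 with ⟨rfl, rfl⟩ | ⟨rfl, rfl⟩
            · exact hr
            · exact hr.symm
      exact ⟨S', hsub.trans h'sub, hcard, fun u v => (hreach u v).trans (hiff u v)⟩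
    · -- the edge is a bridge
      have heS' : s(a, b) ∉ S' := by
        intro hmem
        have : s(a, b) ∈ H'.edgeSet := hsub hmem
        rw [hH', edgeSet_deleteEdges] at this
        exact this.2 rfl
      refine ⟨insert s(a, b) S', ?_, ?_, ?_⟩
      · intro f hf
        rw [Finset.coe_insert, Set.mem_insert_iff] at hf
        rcases hf with rfl | hf
        · exact hab
        · exact h'sub (hsub hf)
      · -- cardinality
        have hKK' : fromEdgeSet (↑S' : Set (Sym2 V)) ≤
            fromEdgeSet (↑(insert s(a, b) S') : Set (Sym2 V)) :=
          fromEdgeSet_mono (by rw [Finset.coe_insert]; exact Set.subset_insert _ _)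
        set f := ConnectedComponent.map (Hom.ofLE hKK') with hfdef
        have hsurjf : Function.Surjective f := by
          intro c
          obtain ⟨v, rfl⟩ := c.exists_rep
          exact ⟨(fromEdgeSet (↑S' : Set (Sym2 V))).connectedComponentMk v, rfl⟩
        have hninj : ¬ Function.Injective f := by
          intro hinj
          have hadj : (fromEdgeSet (↑(insert s(a, b) S') : Set (Sym2 V))).Adj a b := by
            rw [fromEdgeSet_adj]
            exact ⟨by simp, hab.ne⟩
          have h1 : f ((fromEdgeSet (↑S' : Set (Sym2 V))).connectedComponentMk a) =
              f ((fromEdgeSet (↑S' : Set (Sym2 V))).connectedComponentMk b) := by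
            simp only [hfdef, ConnectedComponent.map_mk, Hom.ofLE_apply]
            exact ConnectedComponent.sound hadj.reachable
          have h2 := hinj h1
          have h3 := ConnectedComponent.exact h2
          exact hr ((hreach a b).mp h3)
        have hlt := myCardLt f hsurjf hninj
        have hins : (insert s(a, b) S').card = S'.card + 1 :=
          Finset.card_insert_of_notMem heS'
        omega
      · -- reachability
        intro u v
        constructor
        · refine myReachTrans (fun u v huv => ?_)
          rw [fromEdgeSet_adj, Finset.coe_insert, Set.mem_insert_iff] at huv
          obtain ⟨hmem | hmem, hne⟩ := huv
          · rw [Sym2.eq_iff] at hmem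
            rcases hmem with ⟨rfl, rfl⟩ | ⟨rfl, rfl⟩
            · exact hab.reachable
            · exact hab.reachable.symm
          · have : (fromEdgeSet (↑S' : Set (Sym2 V))).Adj u v := by
              rw [fromEdgeSet_adj]; exact ⟨hmem, hne⟩
            exact (((hreach u v).mp this.reachable).mono (deleteEdges_le _))
        · refine myReachTrans (fun u v huv => ?_)
          rcases myAdjCases H a b u v huv with h1 | h1
          · have := (hreach u v).mpr h1.reachable
            exact this.mono (fromEdgeSet_mono
              (by rw [Finset.coe_insert]; exact Set.subset_insert _ _))
          · have : (fromEdgeSet (↑(insert s(a, b) S') : Set (Sym2 V))).Adj u v := by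
              rw [fromEdgeSet_adj]
              exact ⟨by simp [h1], huv.ne⟩
            exact this.reachable

end MySpan

section MyBad
open SimpleGraph Finset

variable {V : Type*}

lemma myBadColorEq {G : SimpleGraph V} {φ : V → Fin 2} {u v : V}
    (h : (badGraph G φ).Reachable u v) : φ u = φ v := by
  obtain ⟨w⟩ := h
  induction w with
  | nil => rfl
  | cons ha _ ih => exact ha.2.trans ih

lemma myBadWalkToInduce {G : SimpleGraph V} {φ : V → Fin 2} {i : Fin 2} :
    ∀ {x y : V}, (badGraph G φ).Reachable x y → ∀ (hx : x ∈ φ ⁻¹' {i}) (hy : y ∈ φ ⁻¹' {i}),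
      (SimpleGraph.induce (φ ⁻¹' {i}) G).Reachable ⟨x, hx⟩ ⟨y, hy⟩ := by
  intro x y hr
  obtain ⟨w⟩ := hr
  induction w with
  | nil => intro hx hy; exact Reachable.refl _
  | @cons x z y ha p ih =>
    intro hx hy
    have hz : z ∈ φ ⁻¹' {i} := by
      simp only [Set.mem_preimage, Set.mem_singleton_iff] at hx ⊢
      rw [← ha.2]; exact hx
    have hadj : (SimpleGraph.induce (φ ⁻¹' {i}) G).Adj ⟨x, hx⟩ ⟨z, hz⟩ := ha.1
    exact hadj.reachable.trans (ih hz hy)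

lemma myInduceToBad {G : SimpleGraph V} {φ : V → Fin 2} {i : Fin 2}
    {x y : ↥(φ ⁻¹' {i})} (hr : (SimpleGraph.induce (φ ⁻¹' {i}) G).Reachable x y) :
    (badGraph G φ).Reachable ↑x ↑y := by
  obtain ⟨w⟩ := hr
  induction w with
  | nil => exact Reachable.refl _
  | @cons x z y ha p ih =>
    have hadj : (badGraph G φ).Adj ↑x ↑z := by
      refine ⟨ha, ?_⟩
      have h1 : φ ↑x = i := x.2
      have h2 : φ ↑z = i := z.2
      rw [h1, h2]
    exact hadj.reachable.trans ih

/-- The image under `Subtype.val` of the support of the component of `w` in the induced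
graph on color class `i` is the support of the component of `↑w` in `badGraph`. -/
lemma myImageSupp (G : SimpleGraph V) (φ : V → Fin 2) {i : Fin 2} (w : ↥(φ ⁻¹' {i})) :
    Subtype.val '' ((SimpleGraph.induce (φ ⁻¹' {i}) G).connectedComponentMk w).supp =
      ((badGraph G φ).connectedComponentMk ↑w).supp := by
  ext x
  simp only [Set.mem_image, ConnectedComponent.mem_supp_iff]
  constructor
  · rintro ⟨⟨y, hy⟩, hmk, rfl⟩
    exact ConnectedComponent.sound (myInduceToBad (ConnectedComponent.exact hmk))
  · intro hmk
    have hr : (badGraph G φ).Reachable x ↑w := ConnectedComponent.exact hmk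
    have hwi : φ ↑w = i := w.2
    have hx : x ∈ φ ⁻¹' {i} := by
      simp only [Set.mem_preimage, Set.mem_singleton_iff]
      rw [myBadColorEq hr, hwi]
    exact ⟨⟨x, hx⟩, ConnectedComponent.sound (myBadWalkToInduce hr hx w.2), rfl⟩

lemma myMonoIff (G : SimpleGraph V) (φ : V → Fin 2) :
    {X : Set V | IsMonochromaticComponent G φ X} =
      Set.range (ConnectedComponent.supp (G := badGraph G φ)) := by
  ext X
  simp only [Set.mem_setOf_eq, Set.mem_range]
  constructor
  · rintro ⟨i, c, rfl⟩
    obtain ⟨w, rfl⟩ := c.exists_rep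
    exact ⟨(badGraph G φ).connectedComponentMk ↑w, (myImageSupp G φ w).symm ▸
      (myImageSupp G φ w)⟩
  · rintro ⟨c, rfl⟩
    obtain ⟨v, rfl⟩ := c.exists_rep
    refine ⟨φ v, (SimpleGraph.induce (φ ⁻¹' {φ v}) G).connectedComponentMk ⟨v, rfl⟩, ?_⟩
    exact (myImageSupp G φ ⟨v, rfl⟩).symm

end MyBad

section MyCost
open SimpleGraph Finset

variable {V : Type*}

lemma myCostEq [Fintype V] (G : SimpleGraph V) (φ : V → Fin 2) :
    cost G φ + Nat.card (badGraph G φ).ConnectedComponent = Nat.card V := by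
  classical
  haveI : Fintype (badGraph G φ).ConnectedComponent := Fintype.ofFinite _
  have hpos : ∀ c : (badGraph G φ).ConnectedComponent, 1 ≤ Nat.card c.supp := by
    intro c
    obtain ⟨v, rfl⟩ := c.exists_rep
    have hne : Nonempty ((badGraph G φ).connectedComponentMk v).supp := ⟨⟨v, rfl⟩⟩
    exact Nat.one_le_iff_ne_zero.mpr (Nat.card_ne_zero.mpr ⟨hne, inferInstance⟩)
  have hcard : ∀ c : (badGraph G φ).ConnectedComponent,
      Nat.card c.supp = (Finset.univ.filter
        (fun v => (badGraph G φ).connectedComponentMk v = c)).card := by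
    intro c
    rw [Nat.card_eq_fintype_card, Fintype.card_subtype]
    congr 1
    ext v
    simp [ConnectedComponent.mem_supp_iff]
  have hsum : ∑ c : (badGraph G φ).ConnectedComponent, Nat.card c.supp =
      Fintype.card V := by
    rw [← Finset.card_univ,
      Finset.card_eq_sum_card_fiberwise
        (f := (badGraph G φ).connectedComponentMk) (t := Finset.univ)
        (fun x _ => Finset.mem_univ _)]
    exact Finset.sum_congr rfl fun c _ => hcard c
  have hcost : cost G φ = ∑ c : (badGraph G φ).ConnectedComponent,
      (Nat.card c.supp - 1) := by
    rw [cost, myMonoIff, finsum_mem_range ConnectedComponent.supp_injective,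
      finsum_eq_sum_of_fintype]
  rw [hcost, Nat.card_eq_fintype_card (α := (badGraph G φ).ConnectedComponent),
    Nat.card_eq_fintype_card (α := V), ← hsum, Fintype.card_congr (Equiv.refl _)]
  rw [← Finset.card_univ, Finset.card_eq_sum_ones, ← Finset.sum_add_distrib]
  exact Finset.sum_congr rfl fun c _ => Nat.sub_add_cancel (hpos c)

end MyCost

section MyMain
open SimpleGraph

theorem myStmt0 {V : Type*} [Fintype V] (G : SimpleGraph V) (k : ℕ) :
    (∃ φ : V → Fin 2, cost G φ ≤ k) ↔
    ∃ S : Finset (Sym2 V), ↑S ⊆ G.edgeSet ∧ S.card ≤ k ∧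
      (contractEdges G ↑S).Colorable 2 := by
  constructor
  · rintro ⟨φ, hφ⟩
    obtain ⟨S, hsub, hcard, hreach⟩ :=
      mySpanning (badGraph G φ).edgeFinset.card (badGraph G φ) rfl
    have hbadle : (badGraph G φ).edgeSet ⊆ G.edgeSet :=
      edgeSet_mono (fun a b h => h.1)
    refine ⟨S, hsub.trans hbadle, ?_, ?_⟩
    · -- cardinality bound
      have hconst : ∀ (v w : V) (p : (fromEdgeSet (↑S : Set (Sym2 V))).Walk v w),
          p.IsPath → (badGraph G φ).connectedComponentMk v =
            (badGraph G φ).connectedComponentMk w :=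
        fun v w p _ => ConnectedComponent.sound ((hreach v w).mp ⟨p⟩)
      have hsurj : Function.Surjective (ConnectedComponent.lift
          (fun v => (badGraph G φ).connectedComponentMk v) hconst) := by
        intro c
        obtain ⟨v, rfl⟩ := c.exists_rep
        exact ⟨(fromEdgeSet (↑S : Set (Sym2 V))).connectedComponentMk v, rfl⟩
      have h1 : Nat.card (badGraph G φ).ConnectedComponent ≤
          Nat.card (fromEdgeSet (↑S : Set (Sym2 V))).ConnectedComponent :=
        Nat.card_le_card_of_surjective _ hsurj
      have h2 := myCostEq G φ
      omega
    · -- colorability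
      have hconst : ∀ (v w : V) (p : (fromEdgeSet (↑S : Set (Sym2 V))).Walk v w),
          p.IsPath → φ v = φ w :=
        fun v w p _ => myBadColorEq ((hreach v w).mp ⟨p⟩)
      refine ⟨SimpleGraph.Coloring.mk (ConnectedComponent.lift φ hconst) ?_⟩
      rintro c d ⟨hne, u, v, huv, rfl, rfl⟩ heq
      simp only [ConnectedComponent.lift_mk] at heq
      have hbadadj : (badGraph G φ).Adj u v := ⟨huv, heq⟩
      have : (fromEdgeSet (↑S : Set (Sym2 V))).Reachable u v :=
        (hreach u v).mpr hbadadj.reachable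
      exact hne (ConnectedComponent.sound this)
  · rintro ⟨S, hsub, hk, ⟨C⟩⟩
    refine ⟨fun v => C ((fromEdgeSet (↑S : Set (Sym2 V))).connectedComponentMk v), ?_⟩
    set φ : V → Fin 2 :=
      fun v => C ((fromEdgeSet (↑S : Set (Sym2 V))).connectedComponentMk v) with hφ
    have hbadadj : ∀ u v, (badGraph G φ).Adj u v →
        (fromEdgeSet (↑S : Set (Sym2 V))).Reachable u v := by
      rintro u v ⟨hG, huv⟩
      by_cases h : (fromEdgeSet (↑S : Set (Sym2 V))).connectedComponentMk u =
          (fromEdgeSet (↑S : Set (Sym2 V))).connectedComponentMk v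
      · exact ConnectedComponent.exact h
      · exfalso
        have hadj : (contractEdges G ↑S).Adj
            ((fromEdgeSet (↑S : Set (Sym2 V))).connectedComponentMk u)
            ((fromEdgeSet (↑S : Set (Sym2 V))).connectedComponentMk v) :=
          ⟨h, u, v, hG, rfl, rfl⟩
        exact C.valid hadj huv
    have hconst : ∀ (v w : V) (p : (badGraph G φ).Walk v w), p.IsPath →
        (fromEdgeSet (↑S : Set (Sym2 V))).connectedComponentMk v =
          (fromEdgeSet (↑S : Set (Sym2 V))).connectedComponentMk w :=
      fun v w p _ => ConnectedComponent.sound (myReachTrans hbadadj ⟨p⟩)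
    have hsurj : Function.Surjective (ConnectedComponent.lift
        (fun v => (fromEdgeSet (↑S : Set (Sym2 V))).connectedComponentMk v) hconst) := by
      intro c
      obtain ⟨v, rfl⟩ := c.exists_rep
      exact ⟨(badGraph G φ).connectedComponentMk v, rfl⟩
    have h1 : Nat.card (fromEdgeSet (↑S : Set (Sym2 V))).ConnectedComponent ≤
        Nat.card (badGraph G φ).ConnectedComponent :=
      Nat.card_le_card_of_surjective _ hsurj
    have h2 := myCardLe _ (fromEdgeSet (↑S : Set (Sym2 V))) rfl
    have h5 : ∀ (i : Fintype (fromEdgeSet (↑S : Set (Sym2 V))).edgeSet),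
        (@SimpleGraph.edgeFinset V (fromEdgeSet (↑S : Set (Sym2 V))) i).card ≤ S.card := by
      intro i
      apply Finset.card_le_card
      intro e hef
      have he := SimpleGraph.mem_edgeFinset.mp hef
      rw [edgeSet_fromEdgeSet] at he
      exact he.1
    have h6 : Nat.card V ≤ S.card +
        Nat.card (fromEdgeSet (↑S : Set (Sym2 V))).ConnectedComponent :=
      h2.trans (Nat.add_le_add_right (h5 _) _)
    have h4 := myCostEq G φ
    omega

end MyMain

/-- A finite simple graph `G` has a 2-coloring of cost at most `k` iff there is
a set `S` of at most `k` edges of `G` such that `G/S` is bipartite. -/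
theorem stmt0 {V : Type*} [Fintype V] (G : SimpleGraph V) (k : ℕ) :
    (∃ φ : V → Fin 2, cost G φ ≤ k) ↔
    ∃ S : Finset (Sym2 V), ↑S ⊆ G.edgeSet ∧ S.card ≤ k ∧
      (contractEdges G ↑S).Colorable 2 := by
  exact myStmt0 G k
end

section
/- Let G be a finite simple bipartite graph, let T1, T2 be disjoint subsets of V(G), and let uv be an edge of G. If φ is a cheapest (T1,T2)-extension of G − uv and u and v lie in the same good component of φ, then φ (regarded as a 2-coloring of G) is a cheapest (T1,T2)-extension of G, its cost in G equals its cost in G − uv, and consequently for every natural number k, G has a (T1,T2)-extension of cost at most k if and only if G − uv has a (T1,T2)-extension of cost at most k. -/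
open scoped Classical

variable {V : Type*}

section aux

open SimpleGraph

/-- Along a walk in the good graph, `φ + c` is invariant for any proper 2-coloring `c`. -/
lemma aux_parity {V : Type*} {G H : SimpleGraph V} (hle : H ≤ G)
    (c : G.Coloring (Fin 2)) (φ : V → Fin 2) {a b : V}
    (w : (goodGraph H φ).Walk a b) : φ a + c a = φ b + c b := by
  induction w with
  | nil => rfl
  | @cons x y z h p ih =>
      have key : ∀ a b c d : Fin 2, a ≠ b → c ≠ d → a + c = b + d := by decide
      have h' : H.Adj x y ∧ φ x ≠ φ y := h
      exact (key _ _ _ _ h'.2 (c.valid (hle h'.1))).trans ih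

lemma aux_induce_delete_eq {V : Type*} (G : SimpleGraph V) (u v : V) (φ : V → Fin 2)
    (hne : φ u ≠ φ v) (i : Fin 2) :
    SimpleGraph.induce (φ ⁻¹' {i}) (G.deleteEdges {s(u, v)}) =
      SimpleGraph.induce (φ ⁻¹' {i}) G := by
  ext ⟨a, ha⟩ ⟨b, hb⟩
  simp only [comap_adj, Function.Embedding.coe_subtype, deleteEdges_adj,
    Set.mem_singleton_iff, and_iff_left_iff_imp]
  intro _ heq
  rw [Sym2.eq_iff] at heq
  rcases heq with ⟨rfl, rfl⟩ | ⟨rfl, rfl⟩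
  · exact hne (ha.trans hb.symm)
  · exact hne (hb.trans ha.symm)

lemma aux_cost_congr {V : Type*} {G1 G2 : SimpleGraph V} (φ : V → Fin 2)
    (h : ∀ i : Fin 2, SimpleGraph.induce (φ ⁻¹' {i}) G1 = SimpleGraph.induce (φ ⁻¹' {i}) G2) :
    cost G1 φ = cost G2 φ := by
  have hset : {X : Set V | IsMonochromaticComponent G1 φ X} =
      {X : Set V | IsMonochromaticComponent G2 φ X} := by
    have main : ∀ (H1 H2 : SimpleGraph V),
        (∀ i : Fin 2, SimpleGraph.induce (φ ⁻¹' {i}) H1 = SimpleGraph.induce (φ ⁻¹' {i}) H2) →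
        ∀ X, IsMonochromaticComponent H1 φ X → IsMonochromaticComponent H2 φ X := by
      intro H1 H2 hH X hX
      obtain ⟨i, c, rfl⟩ := hX
      revert c
      rw [hH i]
      intro c
      exact ⟨i, c, rfl⟩
    ext X
    exact ⟨main G1 G2 h X, main G2 G1 (fun i => (h i).symm) X⟩
  unfold cost
  rw [hset]

/-- The cost of one color class expressed via connected components. -/
noncomputable def ccCost {W : Type*} [Fintype W] (K : SimpleGraph W) : ℕ :=
  ∑ c : K.ConnectedComponent, (Nat.card c.supp - 1)

lemma aux_card_supp {W : Type*} [Fintype W] (K : SimpleGraph W)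
    (c : K.ConnectedComponent) :
    Nat.card c.supp = (Finset.univ.filter (fun x => K.connectedComponentMk x = c)).card := by
  rw [Nat.card_eq_fintype_card, Fintype.card_subtype]
  congr 1
  apply Finset.filter_congr
  intro x _
  simp [SimpleGraph.ConnectedComponent.mem_supp_iff]

lemma aux_supp_nonempty {W : Type*} [Fintype W] (K : SimpleGraph W)
    (c : K.ConnectedComponent) : 1 ≤ Nat.card c.supp := by
  obtain ⟨x, hx⟩ := c.exists_rep
  have : Nonempty c.supp := ⟨⟨x, by rw [SimpleGraph.ConnectedComponent.mem_supp_iff]; exact hx⟩⟩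
  exact Nat.one_le_iff_ne_zero.mpr (Nat.card_ne_zero.mpr ⟨this, Set.toFinite _⟩)

set_option maxHeartbeats 1000000 in
lemma aux_sum_card_supp {W : Type*} [Fintype W] (K : SimpleGraph W) :
    ∑ c : K.ConnectedComponent, Nat.card c.supp = Fintype.card W := by
  have := Finset.card_eq_sum_card_fiberwise
    (f := K.connectedComponentMk) (s := Finset.univ) (t := Finset.univ)
    (fun x _ => Finset.mem_univ _)
  rw [Finset.card_univ] at this
  rw [this]
  exact Finset.sum_congr rfl fun c _ => aux_card_supp K c

set_option maxHeartbeats 1000000 in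
lemma aux_ccCost_eq {W : Type*} [Fintype W] (K : SimpleGraph W) :
    ccCost K = Fintype.card W - Fintype.card K.ConnectedComponent := by
  apply Nat.eq_sub_of_add_eq
  rw [← aux_sum_card_supp K, ← Finset.card_univ, Finset.card_eq_sum_ones, ccCost,
    ← Finset.sum_add_distrib]
  exact Finset.sum_congr rfl fun c _ => Nat.sub_add_cancel (aux_supp_nonempty K c)

set_option maxHeartbeats 1000000 in
lemma aux_ccCost_mono {W : Type*} [Fintype W] {K K' : SimpleGraph W} (h : K ≤ K') :
    ccCost K ≤ ccCost K' := by
  rw [aux_ccCost_eq, aux_ccCost_eq]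
  apply Nat.sub_le_sub_left
  apply Fintype.card_le_of_surjective
    (SimpleGraph.ConnectedComponent.map (SimpleGraph.Hom.ofLE h))
  intro c'
  obtain ⟨x, rfl⟩ := c'.exists_rep
  exact ⟨K.connectedComponentMk x, rfl⟩

lemma aux_finsum_ccCost {W : Type*} [Fintype W] (K : SimpleGraph W) :
    ∑ᶠ c : K.ConnectedComponent, (Nat.card c.supp - 1) = ccCost K :=
  finsum_eq_sum_of_fintype _

set_option maxHeartbeats 1000000 in
lemma aux_cost_eq {V : Type*} [Fintype V] (G : SimpleGraph V) (φ : V → Fin 2) :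
    cost G φ = ccCost (SimpleGraph.induce (φ ⁻¹' {0}) G) +
      ccCost (SimpleGraph.induce (φ ⁻¹' {1}) G) := by
  set g : ∀ i : Fin 2, (SimpleGraph.induce (φ ⁻¹' {i}) G).ConnectedComponent → Set V :=
    fun i c => Subtype.val '' c.supp with hg
  have hinj : ∀ i, Function.Injective (g i) := by
    intro i c d hcd
    exact SimpleGraph.ConnectedComponent.supp_injective
      ((Set.image_injective.mpr Subtype.val_injective) hcd)
  have hmem : ∀ (i : Fin 2) c, ∃ x ∈ g i c, φ x = i := by
    intro i c
    obtain ⟨y, hy⟩ := c.exists_rep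
    refine ⟨y.1, ⟨y, ?_, rfl⟩, y.2⟩
    rw [SimpleGraph.ConnectedComponent.mem_supp_iff]; exact hy
  have hunion : {X : Set V | IsMonochromaticComponent G φ X} =
      Set.range (g 0) ∪ Set.range (g 1) := by
    ext X
    constructor
    · rintro ⟨i, c, rfl⟩
      fin_cases i
      · exact Or.inl ⟨c, rfl⟩
      · exact Or.inr ⟨c, rfl⟩
    · rintro (⟨c, rfl⟩ | ⟨c, rfl⟩)
      · exact ⟨0, c, rfl⟩
      · exact ⟨1, c, rfl⟩
  have hdisj : Disjoint (Set.range (g 0)) (Set.range (g 1)) := by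
    rw [Set.disjoint_left]
    rintro X ⟨c, rfl⟩ ⟨d, hd⟩
    obtain ⟨x, hx0, hφ0⟩ := hmem 0 c
    rw [← hd] at hx0
    obtain ⟨x', hx1, hφ1⟩ := hmem 1 d
    obtain ⟨y, _, rfl⟩ := hx0
    have : φ y.1 = 1 := y.2
    simp [hφ0] at this
  have himg : ∀ (i : Fin 2) c, Nat.card (g i c) - 1 = Nat.card c.supp - 1 := by
    intro i c
    rw [hg]
    rw [Nat.card_image_of_injective Subtype.val_injective]
  rw [cost, hunion, finsum_mem_union hdisj (Set.toFinite _) (Set.toFinite _),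
    finsum_mem_range (hinj 0), finsum_mem_range (hinj 1)]
  simp only [himg]
  rw [aux_finsum_ccCost, aux_finsum_ccCost]

set_option maxHeartbeats 1000000 in
lemma aux_cost_delete_le {V : Type*} [Fintype V] (G : SimpleGraph V)
    (s : Set (Sym2 V)) (ψ : V → Fin 2) :
    cost (G.deleteEdges s) ψ ≤ cost G ψ := by
  rw [aux_cost_eq, aux_cost_eq]
  have hmono : ∀ i : Fin 2, SimpleGraph.induce (ψ ⁻¹' {i}) (G.deleteEdges s) ≤
      SimpleGraph.induce (ψ ⁻¹' {i}) G :=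
    fun i a b hab => SimpleGraph.deleteEdges_le s hab
  exact Nat.add_le_add (aux_ccCost_mono (hmono 0)) (aux_ccCost_mono (hmono 1))

end aux

/-- if `φ` is a cheapest `(T₁,T₂)`-extension of `G - uv` and `u`, `v` lie in
the same good component of `φ`, then `φ` is a cheapest `(T₁,T₂)`-extension of `G`, its cost
in `G` equals its cost in `G - uv`, and for every `k`, `G` has a `(T₁,T₂)`-extension of cost
at most `k` iff `G - uv` does. -/
theorem stmt3 {V : Type*} [Fintype V] (G : SimpleGraph V) (hbip : G.Colorable 2)
    (T1 T2 : Set V) (hdisj : Disjoint T1 T2) (u v : V) (huv : G.Adj u v)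
    (φ : V → Fin 2)
    (hcheap : IsCheapestExtension (G.deleteEdges {s(u, v)}) φ T1 T2)
    (hsame : ∃ X : Set V, IsGoodComponent (G.deleteEdges {s(u, v)}) φ X ∧ u ∈ X ∧ v ∈ X) :
    IsCheapestExtension G φ T1 T2 ∧
    cost G φ = cost (G.deleteEdges {s(u, v)}) φ ∧
    ∀ k : ℕ,
      (∃ ψ : V → Fin 2, IsExtension ψ T1 T2 ∧ cost G ψ ≤ k) ↔
      (∃ ψ : V → Fin 2, IsExtension ψ T1 T2 ∧ cost (G.deleteEdges {s(u, v)}) ψ ≤ k) := by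
  classical
  set G' := G.deleteEdges {s(u, v)} with hG'
  -- u and v get different colors
  have hne : φ u ≠ φ v := by
    obtain ⟨X, ⟨c, rfl⟩, hu, hv⟩ := hsame
    rw [SimpleGraph.ConnectedComponent.mem_supp_iff] at hu hv
    have hreach : (goodGraph G' φ).Reachable u v :=
      SimpleGraph.ConnectedComponent.eq.mp (hu.trans hv.symm)
    obtain ⟨col⟩ := hbip
    obtain ⟨w⟩ := hreach
    have hpar := aux_parity (SimpleGraph.deleteEdges_le _) col φ w
    have hcol : col u ≠ col v := col.valid huv
    revert hpar hcol
    generalize φ u = a; generalize φ v = b; generalize col u = c'; generalize col v = d'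
    revert a b c' d'
    decide
  have hcost : cost G φ = cost G' φ :=
    aux_cost_congr φ (fun i => (aux_induce_delete_eq G u v φ hne i).symm)
  have hle : ∀ ψ : V → Fin 2, cost G' ψ ≤ cost G ψ := fun ψ => aux_cost_delete_le G _ ψ
  refine ⟨⟨hcheap.1, fun ψ hψ => ?_⟩, hcost, fun k => ⟨?_, ?_⟩⟩
  · calc cost G φ = cost G' φ := hcost
      _ ≤ cost G' ψ := hcheap.2 ψ hψ
      _ ≤ cost G ψ := hle ψ
  · rintro ⟨ψ, hψ, hk⟩
    exact ⟨ψ, hψ, (hle ψ).trans hk⟩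
  · rintro ⟨ψ, hψ, hk⟩
    exact ⟨φ, hcheap.1, hcost ▸ ((hcheap.2 ψ hψ).trans hk)⟩
end

section
/- Let G be a finite simple graph, let Y ⊆ V(G) be a well-connected set in G, let uv be an edge of G, let k ≥ 1 be a natural number, and let φ be a 2-coloring of G − uv of cost at most k. Then every good component C of φ (in G − uv) satisfies |Y ∩ C| ≤ 2k² or |Y \ C| ≤ 2k². -/
open scoped Classical

variable {V : Type*}

section Stmt7Aux

/-- In a walk from inside `C` to outside `C`, there is a crossing edge. -/
lemma stmt7_crossing {V : Type*} {G : SimpleGraph V} {C : Set V} :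
    ∀ {x y : V} (w : G.Walk x y), x ∈ C → y ∉ C →
      ∃ p q, G.Adj p q ∧ p ∈ C ∧ q ∉ C ∧ p ∈ w.support ∧ q ∈ w.support := by
  intro x y w
  induction w with
  | nil => intro hx hy; exact absurd hx hy
  | @cons a c d h w ih =>
    intro hx hy
    by_cases hz : c ∈ C
    · obtain ⟨p, q, h1, h2, h3, h4, h5⟩ := ih hz hy
      exact ⟨p, q, h1, h2, h3, by simp [h4], by simp [h5]⟩
    · exact ⟨a, c, h, hx, hz, by simp, by simp⟩

/-- Both endpoints of a bad edge lie in a common monochromatic component. -/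
lemma stmt7_mono_of_bad {V : Type*} {G : SimpleGraph V} {φ : V → Fin 2} {x y : V}
    (h : (badGraph G φ).Adj x y) :
    ∃ X : Set V, IsMonochromaticComponent G φ X ∧ x ∈ X ∧ y ∈ X := by
  obtain ⟨hadj, hcol⟩ := h
  have hx : x ∈ φ ⁻¹' {φ x} := rfl
  have hy : y ∈ φ ⁻¹' {φ x} := by
    simp only [Set.mem_preimage, Set.mem_singleton_iff]
    exact hcol.symm
  have hadj' : (SimpleGraph.induce (φ ⁻¹' {φ x}) G).Adj ⟨y, hy⟩ ⟨x, hx⟩ := hadj.symm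
  refine ⟨_, ⟨φ x, (SimpleGraph.induce (φ ⁻¹' {φ x}) G).connectedComponentMk ⟨x, hx⟩, rfl⟩,
    ⟨⟨x, hx⟩, rfl, rfl⟩, ⟨⟨y, hy⟩, ?_, rfl⟩⟩
  exact (SimpleGraph.ConnectedComponent.mem_supp_iff _ _).2
    (SimpleGraph.ConnectedComponent.sound hadj'.reachable)

/-- The vertices that belong to some bad edge number at most twice the cost. -/
lemma stmt7_badVertices_bound {V : Type*} [Fintype V] (G : SimpleGraph V) (φ : V → Fin 2) :
    Set.ncard {x : V | ∃ y, (badGraph G φ).Adj x y} ≤ 2 * cost G φ := by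
  classical
  set S : Set (Set V) := {X | IsMonochromaticComponent G φ X} with hS
  have hSfin : S.Finite := Set.toFinite S
  have hcost : cost G φ = ∑ X ∈ hSfin.toFinset, (Nat.card X - 1) := by
    rw [cost, ← finsum_mem_coe_finset, hSfin.coe_toFinset]
  set T2 : Finset (Set V) := hSfin.toFinset.filter (fun X => 2 ≤ X.ncard) with hT2
  have hsub : ({x : V | ∃ y, (badGraph G φ).Adj x y}).toFinset ⊆
      T2.biUnion (fun X => X.toFinset) := by
    intro x hx
    rw [Set.mem_toFinset] at hx
    obtain ⟨y, hxy⟩ := hx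
    obtain ⟨X, hXm, hxX, hyX⟩ := stmt7_mono_of_bad hxy
    refine Finset.mem_biUnion.2 ⟨X, Finset.mem_filter.2 ⟨hSfin.mem_toFinset.2 hXm, ?_⟩,
      Set.mem_toFinset.2 hxX⟩
    have : 1 < X.ncard := (Set.one_lt_ncard (Set.toFinite X)).2
      ⟨x, hxX, y, hyX, hxy.1.ne⟩
    omega
  calc Set.ncard {x : V | ∃ y, (badGraph G φ).Adj x y}
      = ({x : V | ∃ y, (badGraph G φ).Adj x y}).toFinset.card :=
        Set.ncard_eq_toFinset_card' _
    _ ≤ (T2.biUnion (fun X => X.toFinset)).card := Finset.card_le_card hsub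
    _ ≤ ∑ X ∈ T2, X.toFinset.card := Finset.card_biUnion_le
    _ ≤ ∑ X ∈ T2, 2 * (Nat.card X - 1) := by
        refine Finset.sum_le_sum fun X hX => ?_
        have h2 : 2 ≤ X.ncard := (Finset.mem_filter.1 hX).2
        have hXc : X.toFinset.card = X.ncard := (Set.ncard_eq_toFinset_card' _).symm
        rw [hXc, ← Nat.card_coe_set_eq]
        rw [← Nat.card_coe_set_eq] at h2
        omega
    _ = 2 * ∑ X ∈ T2, (Nat.card X - 1) := (Finset.mul_sum _ _ _).symm
    _ ≤ 2 * ∑ X ∈ hSfin.toFinset, (Nat.card X - 1) := by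
        exact Nat.mul_le_mul_left 2 (Finset.sum_le_sum_of_subset (Finset.filter_subset _ _))
    _ = 2 * cost G φ := by rw [hcost]

end Stmt7Aux

/-- if `Y` is well-connected in `G`, `uv ∈ E(G)`, `k ≥ 1` and `φ` is a
2-coloring of `G - uv` of cost at most `k`, then every good component `C` of `φ` in `G - uv`
satisfies `|Y ∩ C| ≤ 2k²` or `|Y \ C| ≤ 2k²`. -/
theorem stmt7 {V : Type*} [Fintype V] (G : SimpleGraph V) (Y : Set V)
    (hY : WellConnected G Y) (u v : V) (huv : G.Adj u v) (k : ℕ) (hk : 1 ≤ k)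
    (φ : V → Fin 2) (hcost : cost (G.deleteEdges {s(u, v)}) φ ≤ k) :
    ∀ C : Set V, IsGoodComponent (G.deleteEdges {s(u, v)}) φ C →
      Nat.card (Y ∩ C : Set V) ≤ 2 * k ^ 2 ∨ Nat.card (Y \ C : Set V) ≤ 2 * k ^ 2 := by
  classical
  intro C hC
  by_contra hcon
  push_neg at hcon
  obtain ⟨h1, h2⟩ := hcon
  rw [Nat.card_coe_set_eq] at h1 h2
  set G' := G.deleteEdges {s(u, v)} with hG'def
  set M : Set V := {x : V | ∃ y, (badGraph G' φ).Adj x y} with hMdef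
  have hMcard : M.ncard ≤ 2 * k :=
    le_trans (stmt7_badVertices_bound G' φ) (Nat.mul_le_mul_left 2 hcost)
  -- |Y| is large
  have hYC : (Y ∩ C).ncard + (Y \ C).ncard = Y.ncard :=
    Set.ncard_inter_add_ncard_diff_eq_ncard Y C
  have hYcard : 4 * k ^ 2 + 2 ≤ Nat.card Y := by
    rw [Nat.card_coe_set_eq]; omega
  -- choose X1 ⊆ Y ∩ C and X2 ⊆ Y \ C of size k + 2
  have hc1 : k + 2 ≤ (Y ∩ C).toFinite.toFinset.card := by
    rw [← Set.ncard_eq_toFinset_card]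
    nlinarith
  have hc2 : k + 2 ≤ (Y \ C).toFinite.toFinset.card := by
    rw [← Set.ncard_eq_toFinset_card]
    nlinarith
  obtain ⟨X1, hX1sub, hX1card⟩ := Finset.exists_subset_card_eq hc1
  obtain ⟨X2, hX2sub, hX2card⟩ := Finset.exists_subset_card_eq hc2
  have hX1Y : ↑X1 ⊆ Y ∩ C := fun x hx => (Set.Finite.mem_toFinset _).1 (hX1sub hx)
  have hX2Y : ↑X2 ⊆ Y \ C := fun x hx => (Set.Finite.mem_toFinset _).1 (hX2sub hx)
  have hle : X1.card ≤ Nat.card Y / 2 := by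
    rw [hX1card]
    rw [Nat.le_div_iff_mul_le (by norm_num : 0 < 2)]
    nlinarith
  obtain ⟨a, b, w, hpath, ha, hb, hdisj⟩ :=
    hY.2 X1 X2 (fun x hx => (hX1Y hx).1) (fun x hx => (hX2Y hx).1)
      (by rw [hX1card, hX2card]) hle
  -- each path crosses the boundary of C
  have key : ∀ i : Fin X1.card,
      (u ∈ (w i).support ∧ v ∈ (w i).support) ∨
      ∃ p q, p ≠ q ∧ p ∈ M ∧ q ∈ M ∧ p ∈ (w i).support ∧ q ∈ (w i).support := by
    intro i
    have hai : a i ∈ C := (hX1Y (ha i)).2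
    have hbi : b i ∉ C := (hX2Y (hb i)).2
    obtain ⟨p, q, hpq, hpC, hqC, hps, hqs⟩ := stmt7_crossing (w i) hai hbi
    by_cases he : s(p, q) = s(u, v)
    · left
      rw [Sym2.eq_iff] at he
      rcases he with ⟨rfl, rfl⟩ | ⟨rfl, rfl⟩
      · exact ⟨hps, hqs⟩
      · exact ⟨hqs, hps⟩
    · right
      have hG'adj : G'.Adj p q := by
        rw [hG'def, SimpleGraph.deleteEdges_adj]
        exact ⟨hpq, by simpa using he⟩
      have hcol : φ p = φ q := by
        by_contra hne
        obtain ⟨c, rfl⟩ := hC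
        have hgood : (goodGraph G' φ).Adj p q := ⟨hG'adj, hne⟩
        refine hqC ((SimpleGraph.ConnectedComponent.mem_supp_iff _ _).2 ?_)
        rw [← (SimpleGraph.ConnectedComponent.mem_supp_iff _ _).1 hpC]
        exact SimpleGraph.ConnectedComponent.sound hgood.symm.reachable
      exact ⟨p, q, hpq.ne, ⟨q, hG'adj, hcol⟩, ⟨p, hG'adj.symm, hcol.symm⟩, hps, hqs⟩
  -- counting
  set I1 : Finset (Fin X1.card) := Finset.univ.filter (fun i => u ∈ (w i).support) with hI1def
  have hI1 : I1.card ≤ 1 := by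
    refine Finset.card_le_one.2 fun i hi j hj => ?_
    by_contra hne
    exact hdisj i j hne u (Finset.mem_filter.1 hi).2 (Finset.mem_filter.1 hj).2
  set f : Fin X1.card → Finset V :=
    fun i => M.toFinite.toFinset ∩ (w i).support.toFinset with hfdef
  have hf2 : ∀ i ∈ Finset.univ \ I1, 2 ≤ (f i).card := by
    intro i hi
    rcases key i with h | ⟨p, q, hne, hpM, hqM, hps, hqs⟩
    · exfalso
      have : i ∈ I1 := Finset.mem_filter.2 ⟨Finset.mem_univ i, h.1⟩
      simp only [Finset.mem_sdiff] at hi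
      exact hi.2 this
    · refine Finset.one_lt_card.2 ⟨p, ?_, q, ?_, hne⟩
      · exact Finset.mem_inter.2 ⟨(Set.Finite.mem_toFinset _).2 hpM, List.mem_toFinset.2 hps⟩
      · exact Finset.mem_inter.2 ⟨(Set.Finite.mem_toFinset _).2 hqM, List.mem_toFinset.2 hqs⟩
  have hdisjf : ∀ i ∈ Finset.univ \ I1, ∀ j ∈ Finset.univ \ I1, i ≠ j →
      Disjoint (f i) (f j) := by
    intro i _ j _ hne
    refine Finset.disjoint_left.2 fun x hx hx' => ?_
    exact hdisj i j hne x (List.mem_toFinset.1 (Finset.mem_inter.1 hx).2)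
      (List.mem_toFinset.1 (Finset.mem_inter.1 hx').2)
  have hcount : 2 * (Finset.univ \ I1).card ≤ M.toFinite.toFinset.card := by
    calc 2 * (Finset.univ \ I1).card = ∑ _i ∈ Finset.univ \ I1, 2 := by
          rw [Finset.sum_const, smul_eq_mul, mul_comm]
      _ ≤ ∑ i ∈ Finset.univ \ I1, (f i).card := Finset.sum_le_sum hf2
      _ = ((Finset.univ \ I1).biUnion f).card := (Finset.card_biUnion hdisjf).symm
      _ ≤ M.toFinite.toFinset.card := Finset.card_le_card
          (Finset.biUnion_subset.2 fun i _ => Finset.inter_subset_left)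
  have hMfc : M.toFinite.toFinset.card = M.ncard := (Set.ncard_eq_toFinset_card _ _).symm
  have huniv : (Finset.univ : Finset (Fin X1.card)).card = k + 2 := by
    simp [hX1card]
  have hsdiff : (Finset.univ \ I1).card = (Finset.univ : Finset (Fin X1.card)).card - I1.card :=
    Finset.card_sdiff_of_subset (Finset.subset_univ I1)
  omega
end

section
/- Let G be a finite simple graph, let T1 and T2 be disjoint subsets of V(G) with T1 ∪ T2 nonempty and |T1| + |T2| ≤ t, let k ≥ 1 and t be natural numbers, and let Y ⊆ V(G) be a well-connected set in G of size at least 2·(4k²)·t·4^(4k²) + 2. Let uv be an edge of G such that G − uv is connected, and let φ be a cheapest (T1,T2)-extension of G − uv of cost at most k. Then there exists exactly one good component C* of φ satisfying |Y \ C*| ≤ 2k², and every good component C ≠ C* of φ satisfies |Y ∩ C| ≤ 2k². -/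
open scoped Classical

variable {V : Type*}

lemma bad_bound {V : Type*} [Fintype V] (H : SimpleGraph V) (φ : V → Fin 2) (k : ℕ)
    (hcost : cost H φ ≤ k) :
    {x : V | ∃ y, H.Adj x y ∧ φ x = φ y}.ncard ≤ 2 * k := by
  classical
  set S : Set (Set V) := {X | IsMonochromaticComponent H φ X} with hS
  have hSfin : S.Finite := Set.toFinite S
  have hcost' : ∑ X ∈ hSfin.toFinset, (X.ncard - 1) ≤ k := by
    have h1 : cost H φ = ∑ X ∈ hSfin.toFinset, (Nat.card X - 1) := by
      rw [cost, ← finsum_mem_coe_finset]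
      congr 1
      simp [Set.Finite.coe_toFinset]
    simp_rw [Nat.card_coe_set_eq] at h1
    omega
  set F2 : Finset (Set V) := hSfin.toFinset.filter (fun X => 2 ≤ X.ncard) with hF2
  have hmem : ∀ x ∈ {x : V | ∃ y, H.Adj x y ∧ φ x = φ y}, ∃ X ∈ F2, x ∈ X := by
    rintro x ⟨y, hadj, hphi⟩
    set i := φ x with hi
    have hx' : x ∈ φ ⁻¹' {i} := by simp [hi]
    have hy' : y ∈ φ ⁻¹' {i} := by simp [← hphi]
    set c := (SimpleGraph.induce (φ ⁻¹' {i}) H).connectedComponentMk ⟨x, hx'⟩ with hc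
    set X : Set V := Subtype.val '' c.supp with hX
    have hXS : X ∈ S := ⟨i, c, rfl⟩
    have hxX : x ∈ X := ⟨⟨x, hx'⟩, rfl, rfl⟩
    have hyX : y ∈ X := by
      refine ⟨⟨y, hy'⟩, ?_, rfl⟩
      rw [SimpleGraph.ConnectedComponent.mem_supp_iff, hc]
      exact SimpleGraph.ConnectedComponent.connectedComponentMk_eq_of_adj
        (by exact hadj.symm : (SimpleGraph.induce (φ ⁻¹' {i}) H).Adj ⟨y, hy'⟩ ⟨x, hx'⟩)
    have hxy : x ≠ y := hadj.ne
    have h2X : 2 ≤ X.ncard := by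
      have : ({x, y} : Set V) ⊆ X := by
        intro z hz; rcases hz with hz | hz <;> simp_all
      calc 2 = ({x, y} : Set V).ncard := (Set.ncard_pair hxy).symm
        _ ≤ X.ncard := Set.ncard_le_ncard this (Set.toFinite X)
    refine ⟨X, ?_, hxX⟩
    rw [hF2, Finset.mem_filter, Set.Finite.mem_toFinset]
    exact ⟨hXS, h2X⟩
  -- counting
  set B := {x : V | ∃ y, H.Adj x y ∧ φ x = φ y} with hB
  have hsub : (Set.toFinite B).toFinset ⊆ F2.biUnion (fun X => (Set.toFinite X).toFinset) := by
    intro x hx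
    rw [Set.Finite.mem_toFinset] at hx
    obtain ⟨X, hX1, hX2⟩ := hmem x hx
    exact Finset.mem_biUnion.2 ⟨X, hX1, (Set.Finite.mem_toFinset _).2 hX2⟩
  have h3 : B.ncard ≤ ∑ X ∈ F2, X.ncard := by
    calc B.ncard = (Set.toFinite B).toFinset.card := Set.ncard_eq_toFinset_card B _
      _ ≤ (F2.biUnion (fun X => (Set.toFinite X).toFinset)).card := Finset.card_le_card hsub
      _ ≤ ∑ X ∈ F2, (Set.toFinite X).toFinset.card := Finset.card_biUnion_le
      _ = ∑ X ∈ F2, X.ncard := by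
          refine Finset.sum_congr rfl fun X _ => ?_
          exact (Set.ncard_eq_toFinset_card X _).symm
  have h4 : ∑ X ∈ F2, X.ncard ≤ 2 * ∑ X ∈ F2, (X.ncard - 1) := by
    rw [Finset.mul_sum]
    refine Finset.sum_le_sum fun X hX => ?_
    have : 2 ≤ X.ncard := (Finset.mem_filter.1 hX).2
    omega
  have h5 : ∑ X ∈ F2, (X.ncard - 1) ≤ ∑ X ∈ hSfin.toFinset, (X.ncard - 1) :=
    Finset.sum_le_sum_of_subset (Finset.filter_subset _ _)
  omega

lemma greedy_window {ι : Type*} (M : ℕ) (w : ι → ℕ) :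
    ∀ f : Finset ι, (∀ i ∈ f, w i ≤ M) → M + 1 ≤ ∑ i ∈ f, w i →
    ∃ s ⊆ f, M + 1 ≤ ∑ i ∈ s, w i ∧ ∑ i ∈ s, w i ≤ 2 * M := by
  intro f
  induction f using Finset.strongInduction with
  | _ f ih =>
    intro hw hsum
    by_cases h2 : ∑ i ∈ f, w i ≤ 2 * M
    · exact ⟨f, Finset.Subset.refl f, hsum, h2⟩
    · push_neg at h2
      obtain ⟨i, hi⟩ : f.Nonempty := by
        rcases f.eq_empty_or_nonempty with h | h
        · simp [h] at h2
        · exact h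
      have hrec := Finset.add_sum_erase f w hi
      have hsum' : M + 1 ≤ ∑ j ∈ f.erase i, w j := by
        have := hw i hi; omega
      obtain ⟨s, hs1, hs2⟩ := ih (f.erase i) (Finset.erase_ssubset hi)
        (fun j hj => hw j (Finset.mem_of_mem_erase hj)) hsum'
      exact ⟨s, hs1.trans (Finset.erase_subset i f), hs2⟩

lemma exists_crossing {V : Type*} {G : SimpleGraph V} {A : Set V} :
    ∀ {a b : V} (w : G.Walk a b), a ∈ A → b ∉ A →
    ∃ x y, G.Adj x y ∧ x ∈ A ∧ y ∉ A ∧ x ∈ w.support ∧ y ∈ w.support := by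
  intro a b w
  induction w with
  | nil => intro ha hb; exact absurd ha hb
  | @cons a c b h p ih =>
    intro ha hb
    by_cases hc : c ∈ A
    · obtain ⟨x, y, h1, h2, h3, h4, h5⟩ := ih hc hb
      exact ⟨x, y, h1, h2, h3, by simp [h4], by simp [h5]⟩
    · exact ⟨a, c, h, ha, hc, by simp, by simp [SimpleGraph.Walk.start_mem_support]⟩
lemma main_contra {V : Type*} [Fintype V] (G : SimpleGraph V) (k : ℕ) (hk : 1 ≤ k)
    (Y : Set V) (hY : WellConnected G Y) (hYbig : 8 * k ^ 2 + 2 ≤ Nat.card Y)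
    (u v : V) (φ : V → Fin 2)
    (hcost : cost (G.deleteEdges {s(u, v)}) φ ≤ k)
    (A : Set V)
    (hclosed : ∀ x ∈ A, ∀ y, (goodGraph (G.deleteEdges {s(u, v)}) φ).Reachable x y → y ∈ A)
    (h1 : 2 * k ^ 2 + 1 ≤ (Y ∩ A).ncard) (h2 : 2 * k ^ 2 + 1 ≤ (Y \ A).ncard) : False := by
  classical
  set H := G.deleteEdges {s(u, v)} with hH
  set n := 2 * k ^ 2 + 1 with hn
  have hYn : Y.ncard = Nat.card Y := (Nat.card_coe_set_eq Y).symm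
  -- choose X1 ⊆ Y ∩ A, X2 ⊆ Y \ A of card n
  obtain ⟨X1, hX1sub, hX1card⟩ : ∃ X1 : Finset V, ↑X1 ⊆ Y ∩ A ∧ X1.card = n := by
    obtain ⟨X1, h1', h2'⟩ := Finset.exists_subset_card_eq
      (show n ≤ (Set.toFinite (Y ∩ A)).toFinset.card by
        rw [← Set.ncard_eq_toFinset_card]; exact h1)
    exact ⟨X1, fun x hx => (Set.Finite.mem_toFinset _).1 (h1' hx), h2'⟩
  obtain ⟨X2, hX2sub, hX2card⟩ : ∃ X2 : Finset V, ↑X2 ⊆ Y \ A ∧ X2.card = n := by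
    obtain ⟨X2, h1', h2'⟩ := Finset.exists_subset_card_eq
      (show n ≤ (Set.toFinite (Y \ A)).toFinset.card by
        rw [← Set.ncard_eq_toFinset_card]; exact h2)
    exact ⟨X2, fun x hx => (Set.Finite.mem_toFinset _).1 (h1' hx), h2'⟩
  have hple : X1.card ≤ Nat.card Y / 2 := by
    rw [hX1card, Nat.le_div_iff_mul_le (by norm_num : 0 < 2)]
    omega
  obtain ⟨a, b, w, hpath, ha, hb, hdisj⟩ := hY.2 X1 X2
    (fun x hx => ((hX1sub hx).1 : x ∈ Y)) (fun x hx => (hX2sub hx).1)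
    (by rw [hX1card, hX2card]) hple
  -- crossing vertices
  have hcross : ∀ i : Fin X1.card, ∃ x y, G.Adj x y ∧ x ∈ A ∧ y ∉ A ∧
      x ∈ (w i).support ∧ y ∈ (w i).support :=
    fun i => exists_crossing (w i) ((hX1sub (ha i)).2) ((hX2sub (hb i)).2)
  choose x y hadj hxA hyA hxs hys using hcross
  set B : Set V := {z : V | ∃ z', H.Adj z z' ∧ φ z = φ z'} ∪ {u, v} with hBdef
  have hBmem : ∀ i, x i ∈ B ∧ y i ∈ B := by
    intro i
    by_cases he : s(x i, y i) = s(u, v)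
    · rw [Sym2.eq_iff] at he
      rcases he with ⟨h1', h2'⟩ | ⟨h1', h2'⟩ <;>
        constructor <;> (apply Set.mem_union_right) <;> simp [h1', h2']
    · have hHadj : H.Adj (x i) (y i) := by
        rw [hH, SimpleGraph.deleteEdges_adj]
        exact ⟨hadj i, by simpa using he⟩
      by_cases hphi : φ (x i) = φ (y i)
      · exact ⟨Set.mem_union_left _ ⟨y i, hHadj, hphi⟩,
          Set.mem_union_left _ ⟨x i, hHadj.symm, hphi.symm⟩⟩
      · exfalso
        exact hyA i (hclosed (x i) (hxA i) (y i)
          (SimpleGraph.Adj.reachable (And.intro hHadj hphi)))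
  -- bound on B
  have hBbound : B.ncard ≤ 2 * k + 2 := by
    have hb1 : {z : V | ∃ z', H.Adj z z' ∧ φ z = φ z'}.ncard ≤ 2 * k :=
      bad_bound H φ k hcost
    have hb2 : ({u, v} : Set V).ncard ≤ 2 := by
      calc ({u, v} : Set V).ncard ≤ ({v} : Set V).ncard + 1 := Set.ncard_insert_le u {v}
        _ = 2 := by rw [Set.ncard_singleton]
    calc B.ncard ≤ _ + _ := Set.ncard_union_le _ _
      _ ≤ 2 * k + 2 := by omega
  -- disjoint pairs
  set T : Fin X1.card → Finset V := fun i => {x i, y i} with hT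
  have hTcard : ∀ i, (T i).card = 2 := by
    intro i
    rw [hT]
    rw [Finset.card_insert_of_notMem (by simp; intro h; exact hyA i (h ▸ hxA i)),
      Finset.card_singleton]
  have hTdisj : ∀ i j : Fin X1.card, i ≠ j → Disjoint (T i) (T j) := by
    intro i j hij
    rw [Finset.disjoint_left]
    intro z hzi hzj
    have hzi' : z ∈ (w i).support := by
      rcases Finset.mem_insert.1 hzi with h | h
      · exact h ▸ hxs i
      · exact (Finset.mem_singleton.1 h) ▸ hys i
    have hzj' : z ∈ (w j).support := by
      rcases Finset.mem_insert.1 hzj with h | h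
      · exact h ▸ hxs j
      · exact (Finset.mem_singleton.1 h) ▸ hys j
    exact hdisj i j hij z hzi' hzj'
  have hTsub : (Finset.univ : Finset (Fin X1.card)).biUnion T ⊆ (Set.toFinite B).toFinset := by
    intro z hz
    obtain ⟨i, _, hzi⟩ := Finset.mem_biUnion.1 hz
    rw [Set.Finite.mem_toFinset]
    rcases Finset.mem_insert.1 hzi with h | h
    · exact h ▸ (hBmem i).1
    · exact (Finset.mem_singleton.1 h) ▸ (hBmem i).2
  have hcount : 2 * n ≤ 2 * k + 2 := by
    calc 2 * n = ∑ i : Fin X1.card, (T i).card := by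
          rw [Finset.sum_congr rfl (fun i _ => hTcard i)]
          simp [hX1card]; ring
      _ = ((Finset.univ : Finset (Fin X1.card)).biUnion T).card :=
          (Finset.card_biUnion (fun i _ j _ hij => hTdisj i j hij)).symm
      _ ≤ (Set.toFinite B).toFinset.card := Finset.card_le_card hTsub
      _ = B.ncard := (Set.ncard_eq_toFinset_card B _).symm
      _ ≤ 2 * k + 2 := hBbound
  nlinarith [hcount, hn, hk]
/-- under the stated hypotheses, there is exactly one good component `C*` of the
cheapest `(T₁,T₂)`-extension `φ` of `G - uv` with `|Y \ C*| ≤ 2k²`, and every other good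
component `C` of `φ` satisfies `|Y ∩ C| ≤ 2k²`. -/
theorem stmt8 {V : Type*} [Fintype V] (G : SimpleGraph V) (k t : ℕ) (hk : 1 ≤ k)
    (T1 T2 : Set V) (hdisj : Disjoint T1 T2) (hne : (T1 ∪ T2).Nonempty)
    (ht : Nat.card T1 + Nat.card T2 ≤ t)
    (Y : Set V) (hY : WellConnected G Y)
    (hYcard : 2 * (4 * k ^ 2) * t * 4 ^ (4 * k ^ 2) + 2 ≤ Nat.card Y)
    (u v : V) (huv : G.Adj u v) (hconn : (G.deleteEdges {s(u, v)}).Connected)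
    (φ : V → Fin 2) (hcheap : IsCheapestExtension (G.deleteEdges {s(u, v)}) φ T1 T2)
    (hcost : cost (G.deleteEdges {s(u, v)}) φ ≤ k) :
    ∃ C : Set V, IsGoodComponent (G.deleteEdges {s(u, v)}) φ C ∧
      Nat.card (Y \ C : Set V) ≤ 2 * k ^ 2 ∧
      (∀ C' : Set V, IsGoodComponent (G.deleteEdges {s(u, v)}) φ C' →
        Nat.card (Y \ C' : Set V) ≤ 2 * k ^ 2 → C' = C) ∧
      (∀ C' : Set V, IsGoodComponent (G.deleteEdges {s(u, v)}) φ C' → C' ≠ C →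
        Nat.card (Y ∩ C' : Set V) ≤ 2 * k ^ 2) := by
  classical
  set H := G.deleteEdges {s(u, v)} with hH
  have ht1 : 1 ≤ t := by
    have hpos : 0 < Nat.card T1 + Nat.card T2 := by
      rcases hne with ⟨z, hz | hz⟩
      · have : Nonempty ↥T1 := ⟨⟨z, hz⟩⟩
        have := Nat.card_pos (α := ↥T1)
        omega
      · have : Nonempty ↥T2 := ⟨⟨z, hz⟩⟩
        have := Nat.card_pos (α := ↥T2)
        omega
    omega
  have h4pow : 1 ≤ 4 ^ (4 * k ^ 2) := Nat.one_le_pow _ _ (by norm_num)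
  have hYbig : 8 * k ^ 2 + 2 ≤ Nat.card Y := by
    have hmul : 2 * (4 * k ^ 2) * 1 * 1 ≤ 2 * (4 * k ^ 2) * t * 4 ^ (4 * k ^ 2) :=
      Nat.mul_le_mul (Nat.mul_le_mul_left _ ht1) h4pow
    nlinarith [hmul, hYcard]
  have hYn : Y.ncard = Nat.card Y := Nat.card_coe_set_eq Y
  by_cases hex : ∃ c : (goodGraph H φ).ConnectedComponent, 2 * k ^ 2 + 1 ≤ (Y ∩ c.supp).ncard
  · obtain ⟨c, hc⟩ := hex
    have hclosed : ∀ x ∈ c.supp, ∀ y, (goodGraph H φ).Reachable x y → y ∈ c.supp := by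
      intro x hx y hr
      rw [SimpleGraph.ConnectedComponent.mem_supp_iff] at hx ⊢
      rw [← hx]
      exact (SimpleGraph.ConnectedComponent.sound hr.symm)
    have hsmall : (Y \ c.supp).ncard ≤ 2 * k ^ 2 := by
      by_contra hcon
      push_neg at hcon
      exact main_contra G k hk Y hY hYbig u v φ hcost c.supp hclosed hc hcon
    refine ⟨c.supp, ⟨c, rfl⟩, ?_, ?_, ?_⟩
    · rw [Nat.card_coe_set_eq]; exact hsmall
    · rintro C' ⟨c', rfl⟩ h'
      by_contra hne'
      have hcc : c' ≠ c := fun h => hne' (by rw [h])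
      rw [Nat.card_coe_set_eq] at h'
      have hsub : Y ∩ c.supp ⊆ Y \ c'.supp := by
        rintro z ⟨hz1, hz2⟩
        refine ⟨hz1, fun hz3 => hcc ?_⟩
        rw [SimpleGraph.ConnectedComponent.mem_supp_iff] at hz2 hz3
        rw [← hz2, ← hz3]
      have htot : (Y ∩ c.supp).ncard + (Y \ c.supp).ncard = Y.ncard :=
        Set.ncard_inter_add_ncard_diff_eq_ncard Y c.supp (Set.toFinite Y)
      have hle : (Y ∩ c.supp).ncard ≤ (Y \ c'.supp).ncard :=
        Set.ncard_le_ncard hsub (Set.toFinite _)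
      omega
    · rintro C' ⟨c', rfl⟩ hne'
      have hcc : c' ≠ c := fun h => hne' (by rw [h])
      have hsub : Y ∩ c'.supp ⊆ Y \ c.supp := by
        rintro z ⟨hz1, hz2⟩
        refine ⟨hz1, fun hz3 => hcc ?_⟩
        rw [SimpleGraph.ConnectedComponent.mem_supp_iff] at hz2 hz3
        rw [← hz2, ← hz3]
      rw [Nat.card_coe_set_eq]
      exact le_trans (Set.ncard_le_ncard hsub (Set.toFinite _)) hsmall
  · exfalso
    push_neg at hex
    set q : V → (goodGraph H φ).ConnectedComponent := (goodGraph H φ).connectedComponentMk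
      with hq
    set Yf := (Set.toFinite Y).toFinset with hYf
    set wt : (goodGraph H φ).ConnectedComponent → ℕ :=
      fun c => (Yf.filter (fun z => q z = c)).card with hwt
    have hwteq : ∀ c, wt c = (Y ∩ c.supp).ncard := by
      intro c
      show (Yf.filter (fun z => q z = c)).card = _
      rw [← Set.ncard_coe_finset]
      congr 1
      ext z
      simp only [Finset.coe_filter, Set.mem_setOf_eq, Set.mem_inter_iff,
        SimpleGraph.ConnectedComponent.mem_supp_iff, hYf, Set.Finite.mem_toFinset, hq]
    have htotal : ∑ c ∈ Yf.image q, wt c = Yf.card :=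
      (Finset.card_eq_sum_card_image q Yf).symm
    have hYfcard : Yf.card = Nat.card Y := by
      rw [hYf, ← Set.ncard_eq_toFinset_card]
      exact hYn
    obtain ⟨sel, hsel_sub, hsel_lo, hsel_hi⟩ := greedy_window (2 * k ^ 2) wt (Yf.image q)
      (fun c _ => by rw [hwteq]; have := hex c; omega)
      (by rw [htotal, hYfcard]; omega)
    set A : Set V := {z | q z ∈ sel} with hA
    have hclosed : ∀ x ∈ A, ∀ y, (goodGraph H φ).Reachable x y → y ∈ A := by
      intro x hx y hr
      have hqq : q x = q y := SimpleGraph.ConnectedComponent.sound hr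
      simp only [hA, Set.mem_setOf_eq] at hx ⊢
      rw [← hqq]
      exact hx
    have hYA : (Y ∩ A).ncard = ∑ c ∈ sel, wt c := by
      have hfe : Y ∩ A = ↑(Yf.filter (fun z => q z ∈ sel)) := by
        ext z
        simp only [hA, Set.mem_setOf_eq, Set.mem_inter_iff, Finset.coe_filter,
          hYf, Set.Finite.mem_toFinset]
      rw [hfe, Set.ncard_coe_finset,
        Finset.card_eq_sum_card_fiberwise
          (f := q) (s := Yf.filter (fun z => q z ∈ sel)) (t := sel) (fun z hz => (Finset.mem_filter.1 hz).2)]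
      refine Finset.sum_congr rfl fun c hc => ?_
      rw [hwt]
      congr 1
      rw [Finset.filter_filter]
      refine Finset.filter_congr fun z _ => ?_
      constructor
      · rintro ⟨_, h2⟩; exact h2
      · intro h2; exact ⟨h2 ▸ hc, h2⟩
    have htot : (Y ∩ A).ncard + (Y \ A).ncard = Y.ncard :=
      Set.ncard_inter_add_ncard_diff_eq_ncard Y A (Set.toFinite Y)
    refine main_contra G k hk Y hY hYbig u v φ hcost A hclosed ?_ ?_
    · rw [hYA]; exact hsel_lo
    · rw [hYA] at htot
      omega
end

section
/- Let G be a finite simple bipartite graph, let k ≥ 1 and t be natural numbers, let T1 and T2 be disjoint subsets of V(G) with T1 ∪ T2 nonempty and |T1| + |T2| ≤ t, and let Y ⊆ V(G) be a well-connected set in G of size at least 2·(4k²)·t·4^(4k²) + 2. Let G* be the graph obtained from G by adding a new vertex y* adjacent to exactly the vertices of Y, and let Z be the union, over all x ∈ T1 ∪ T2, of all (x,y*)-important sets X in G* with d_{G*}(X) ≤ 4k². Let uv be an edge of G with u ∉ Z and v ∉ Z such that G − uv is connected. Then G has a (T1,T2)-extension of cost at most k if and only if G − uv has a (T1,T2)-extension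 of cost at most k. -/
open scoped Classical

variable {V : Type*}

theorem badGraph_adj {G : SimpleGraph V} {φ : V → Fin 2} {u v : V} :
    (badGraph G φ).Adj u v ↔ G.Adj u v ∧ φ u = φ v := Iff.rfl

lemma badGraph_walk_color {G : SimpleGraph V} {φ : V → Fin 2} {a b : V}
    (p : (badGraph G φ).Walk a b) : φ a = φ b := by
  induction p with
  | nil => rfl
  | cons h _ ih => exact (badGraph_adj.mp h).2.trans ih

lemma induce_reach_of_badWalk {G : SimpleGraph V} {φ : V → Fin 2} {i : Fin 2} {a b : V}
    (p : (badGraph G φ).Walk a b) : ∀ (ha : a ∈ φ ⁻¹' {i}) (hb : b ∈ φ ⁻¹' {i}),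
    (SimpleGraph.induce (φ ⁻¹' {i}) G).Reachable ⟨a, ha⟩ ⟨b, hb⟩ := by
  induction p with
  | nil => intro ha hb; exact SimpleGraph.Reachable.refl _
  | @cons u w _ h p ih =>
    intro ha hb
    have hw : w ∈ φ ⁻¹' {i} := by
      simp only [Set.mem_preimage, Set.mem_singleton_iff] at ha ⊢
      rw [← (badGraph_adj.mp h).2]; exact ha
    exact (SimpleGraph.Adj.reachable
      (by exact (badGraph_adj.mp h).1 : (SimpleGraph.induce (φ ⁻¹' {i}) G).Adj ⟨u, ha⟩ ⟨w, hw⟩)).trans (ih hw hb)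

lemma bad_reach_of_induce {G : SimpleGraph V} {φ : V → Fin 2} {i : Fin 2}
    {a b : (φ ⁻¹' {i} : Set V)}
    (h : (SimpleGraph.induce (φ ⁻¹' {i}) G).Reachable a b) :
    (badGraph G φ).Reachable a.val b.val := by
  refine h.map ⟨Subtype.val, ?_⟩
  rintro ⟨x, hx⟩ ⟨y, hy⟩ hxy
  refine badGraph_adj.mpr ⟨hxy, ?_⟩
  simp only [Set.mem_preimage, Set.mem_singleton_iff] at hx hy
  rw [hx, hy]

lemma supp_eq_bad {G : SimpleGraph V} {φ : V → Fin 2} {i : Fin 2} (z : V)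
    (hz : z ∈ φ ⁻¹' {i}) :
    Subtype.val '' ((SimpleGraph.induce (φ ⁻¹' {i}) G).connectedComponentMk ⟨z, hz⟩).supp
      = ((badGraph G φ).connectedComponentMk z).supp := by
  ext y
  constructor
  · rintro ⟨⟨x, hx⟩, hx2, rfl⟩
    rw [SimpleGraph.ConnectedComponent.mem_supp_iff, SimpleGraph.ConnectedComponent.eq] at hx2 ⊢
    exact bad_reach_of_induce hx2
  · intro hy
    rw [SimpleGraph.ConnectedComponent.mem_supp_iff, SimpleGraph.ConnectedComponent.eq] at hy
    obtain ⟨p⟩ := hy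
    have hycol : y ∈ φ ⁻¹' {i} := by
      simp only [Set.mem_preimage, Set.mem_singleton_iff] at hz ⊢
      rw [badGraph_walk_color p]; exact hz
    refine ⟨⟨y, hycol⟩, ?_, rfl⟩
    rw [SimpleGraph.ConnectedComponent.mem_supp_iff, SimpleGraph.ConnectedComponent.eq]
    exact induce_reach_of_badWalk p hycol hz

lemma mono_comp_eq_range (G : SimpleGraph V) (φ : V → Fin 2) :
    {X : Set V | ∃ (i : Fin 2) (c : (SimpleGraph.induce (φ ⁻¹' {i}) G).ConnectedComponent),
      X = Subtype.val '' c.supp} =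
    Set.range (fun c : (badGraph G φ).ConnectedComponent => c.supp) := by
  ext X
  constructor
  · rintro ⟨i, c, rfl⟩
    obtain ⟨⟨z, hz⟩, hrep⟩ := c.exists_rep
    exact ⟨(badGraph G φ).connectedComponentMk z, by rw [← hrep]; exact (supp_eq_bad z hz).symm⟩
  · rintro ⟨c, rfl⟩
    obtain ⟨z, hrep⟩ := c.exists_rep
    have hz : z ∈ φ ⁻¹' {φ z} := rfl
    exact ⟨φ z, (SimpleGraph.induce (φ ⁻¹' {φ z}) G).connectedComponentMk ⟨z, hz⟩,
      by rw [← hrep]; exact (supp_eq_bad z hz).symm⟩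

lemma cost_add_card [Fintype V] (G : SimpleGraph V) (φ : V → Fin 2) :
    cost G φ + Nat.card (badGraph G φ).ConnectedComponent = Fintype.card V := by
  classical
  haveI : Fintype ((badGraph G φ).ConnectedComponent) := Fintype.ofFinite _
  have h1 : cost G φ = ∑ c : (badGraph G φ).ConnectedComponent, (Nat.card c.supp - 1) := by
    rw [cost]
    have : {X : Set V | IsMonochromaticComponent G φ X} =
        Set.range (fun c : (badGraph G φ).ConnectedComponent => c.supp) :=
      mono_comp_eq_range G φ
    rw [this, finsum_mem_range SimpleGraph.ConnectedComponent.supp_injective,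
      finsum_eq_sum_of_fintype]
  have h2 : ∀ c : (badGraph G φ).ConnectedComponent, 1 ≤ Nat.card c.supp := by
    intro c
    obtain ⟨z, hz⟩ := c.exists_rep
    have hmem : z ∈ c.supp := by rw [SimpleGraph.ConnectedComponent.mem_supp_iff]; exact hz
    haveI : Nonempty c.supp := ⟨⟨z, hmem⟩⟩
    exact Nat.one_le_iff_ne_zero.mpr (Nat.card_ne_zero.mpr ⟨‹_›, Set.toFinite _⟩)
  have h3 : ∑ c : (badGraph G φ).ConnectedComponent, (Nat.card c.supp - 1)
      + Fintype.card ((badGraph G φ).ConnectedComponent)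
      = ∑ c : (badGraph G φ).ConnectedComponent, Nat.card c.supp := by
    rw [Fintype.card, Finset.card_eq_sum_ones, ← Finset.sum_add_distrib]
    exact Finset.sum_congr rfl fun c _ => by have := h2 c; omega
  have h4 : ∑ c : (badGraph G φ).ConnectedComponent, Nat.card c.supp = Fintype.card V := by
    have hfib := Finset.card_eq_sum_card_fiberwise
      (f := (badGraph G φ).connectedComponentMk) (s := Finset.univ) (t := Finset.univ)
      (fun x _ => Finset.mem_univ _)
    rw [Finset.card_univ] at hfib
    rw [hfib]
    refine Finset.sum_congr rfl fun c _ => ?_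
    rw [Nat.card_eq_fintype_card, Fintype.card_subtype]
    congr 1
    exact Finset.filter_congr fun x _ => Iff.rfl
  rw [h1, Nat.card_eq_fintype_card]
  omega

lemma card_comps_le [Fintype V] {G₁ G₂ : SimpleGraph V} (h : G₁ ≤ G₂) :
    Nat.card G₂.ConnectedComponent ≤ Nat.card G₁.ConnectedComponent := by
  apply Nat.card_le_card_of_surjective
    (SimpleGraph.ConnectedComponent.map (SimpleGraph.Hom.ofLE h))
  intro c
  obtain ⟨v, hv⟩ := c.exists_rep
  exact ⟨G₁.connectedComponentMk v, by
    rw [SimpleGraph.ConnectedComponent.map_mk, ← hv]; rfl⟩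

lemma cost_mono [Fintype V] {G₁ G₂ : SimpleGraph V} {φ ψ : V → Fin 2}
    (h : badGraph G₁ φ ≤ badGraph G₂ ψ) : cost G₁ φ ≤ cost G₂ ψ := by
  have h1 := cost_add_card G₁ φ
  have h2 := cost_add_card G₂ ψ
  have h3 := card_comps_le h
  omega

lemma cost_eq_finsum (G : SimpleGraph V) (φ : V → Fin 2) :
    cost G φ = ∑ᶠ c : (badGraph G φ).ConnectedComponent, (Nat.card c.supp - 1) := by
  rw [cost]
  have : {X : Set V | IsMonochromaticComponent G φ X} =
      Set.range (fun c : (badGraph G φ).ConnectedComponent => c.supp) :=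
    mono_comp_eq_range G φ
  rw [this, finsum_mem_range SimpleGraph.ConnectedComponent.supp_injective]

lemma supp_two_le [Fintype V] {B : SimpleGraph V} {x y : V} (h : B.Adj x y) :
    2 ≤ Nat.card (B.connectedComponentMk x).supp := by
  classical
  rw [Nat.card_eq_fintype_card, Fintype.card_subtype]
  refine Finset.one_lt_card.mpr ⟨x, ?_, y, ?_, (h.ne).symm ∘ Eq.symm⟩
  · simp only [Finset.mem_filter, Finset.mem_univ, true_and,
      SimpleGraph.ConnectedComponent.mem_supp_iff]
  · simp only [Finset.mem_filter, Finset.mem_univ, true_and,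
      SimpleGraph.ConnectedComponent.mem_supp_iff]
    exact SimpleGraph.ConnectedComponent.sound h.symm.reachable

lemma support_card_le [Fintype V] {G : SimpleGraph V} {φ : V → Fin 2} {k : ℕ}
    (h : cost G φ ≤ k) : Nat.card (badGraph G φ).support ≤ 2 * k := by
  classical
  set B := badGraph G φ with hB
  haveI : Fintype B.ConnectedComponent := Fintype.ofFinite _
  have hcost : ∑ c : B.ConnectedComponent, (Nat.card c.supp - 1) ≤ k := by
    rw [← finsum_eq_sum_of_fintype, ← cost_eq_finsum]; exact h
  have hW : Nat.card B.support = (Finset.univ.filter (· ∈ B.support)).card := by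
    rw [Nat.card_eq_fintype_card, Fintype.card_subtype]
  rw [hW, Finset.card_eq_sum_card_fiberwise
    (f := B.connectedComponentMk) (t := Finset.univ) (fun x _ => Finset.mem_univ _)]
  have hper : ∀ c : B.ConnectedComponent,
      ((Finset.univ.filter (· ∈ B.support)).filter (fun x => B.connectedComponentMk x = c)).card
      ≤ 2 * (Nat.card c.supp - 1) := by
    intro c
    by_cases hne : ((Finset.univ.filter (· ∈ B.support)).filter
        (fun x => B.connectedComponentMk x = c)).Nonempty
    · obtain ⟨x, hx⟩ := hne
      simp only [Finset.mem_filter, Finset.mem_univ, true_and] at hx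
      obtain ⟨⟨y, hxy⟩, hmk⟩ := hx
      have h2 : 2 ≤ Nat.card c.supp := by rw [← hmk]; exact supp_two_le hxy
      have hsub : ((Finset.univ.filter (· ∈ B.support)).filter
          (fun x => B.connectedComponentMk x = c)).card ≤ Nat.card c.supp := by
        rw [Nat.card_eq_fintype_card, Fintype.card_subtype]
        apply Finset.card_le_card
        intro z hz
        simp only [Finset.mem_filter, Finset.mem_univ, true_and] at hz ⊢
        exact hz.2
      omega
    · rw [Finset.not_nonempty_iff_eq_empty] at hne
      rw [hne]
      simp
  calc ∑ c : B.ConnectedComponent, ((Finset.univ.filter (· ∈ B.support)).filter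
        (fun x => B.connectedComponentMk x = c)).card
      ≤ ∑ c : B.ConnectedComponent, 2 * (Nat.card c.supp - 1) :=
        Finset.sum_le_sum fun c _ => hper c
    _ = 2 * ∑ c : B.ConnectedComponent, (Nat.card c.supp - 1) := by
        rw [Finset.mul_sum]
    _ ≤ 2 * k := by omega

lemma edge_card_le [Fintype V] {G : SimpleGraph V} {φ : V → Fin 2} {k : ℕ}
    (h : cost G φ ≤ k) : Nat.card (badGraph G φ).edgeSet ≤ 2 * k * k - k := by
  classical
  set B := badGraph G φ with hB
  set Wf : Finset V := Finset.univ.filter (· ∈ B.support) with hWf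
  have hWcard : Wf.card ≤ 2 * k := by
    have := support_card_le h
    rwa [Nat.card_eq_fintype_card, Fintype.card_subtype] at this
  have hsub : B.edgeFinset ⊆ Wf.offDiag.image Sym2.mk.uncurry := by
    intro e he
    induction e with
    | h a b =>
      rw [SimpleGraph.mem_edgeFinset, SimpleGraph.mem_edgeSet] at he
      refine Finset.mem_image.mpr ⟨(a, b), ?_, rfl⟩
      rw [Finset.mem_offDiag]
      refine ⟨?_, ?_, he.ne⟩ <;>
        simp only [hWf, Finset.mem_filter, Finset.mem_univ, true_and,
          SimpleGraph.mem_support]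
      · exact ⟨b, he⟩
      · exact ⟨a, he.symm⟩
  have hcard : B.edgeFinset.card ≤ Wf.card.choose 2 := by
    calc B.edgeFinset.card ≤ (Wf.offDiag.image Sym2.mk.uncurry).card := Finset.card_le_card hsub
      _ = Wf.card.choose 2 := Sym2.card_image_offDiag Wf
  have h2 : Wf.card.choose 2 ≤ (2 * k).choose 2 := Nat.choose_le_choose 2 hWcard
  have h3 : (2 * k).choose 2 = 2 * k * k - k := by
    rw [Nat.choose_two_right]
    have : 2 * k * (2 * k - 1) = 2 * (k * (2 * k - 1)) := by ring
    rw [this, Nat.mul_div_cancel_left _ (by norm_num : (0:ℕ) < 2)]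
    cases k with
    | zero => simp
    | succ n =>
      have e1 : 2 * (n+1) - 1 = 2*n + 1 := by omega
      rw [e1]
      have e2 : 2*(n+1)*(n+1) = (n+1)*(2*n+1) + (n+1) := by ring
      omega
  have h4 : Nat.card B.edgeSet = B.edgeFinset.card := by
    rw [Nat.card_eq_fintype_card]
    exact (SimpleGraph.edgeFinset_card (G := B)).symm
  omega

lemma walk_cross {G : SimpleGraph V} {D : Set V} {a b : V} (p : G.Walk a b) :
    a ∈ D → b ∉ D →
    ∃ x y, G.Adj x y ∧ x ∈ D ∧ y ∉ D ∧ x ∈ p.support ∧ y ∈ p.support := by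
  induction p with
  | nil => intro ha hb; exact absurd ha hb
  | @cons u w _ h p ih =>
    intro ha hb
    by_cases hw : w ∈ D
    · obtain ⟨x, y, hxy, hx, hy, hxs, hys⟩ := ih hw hb
      exact ⟨x, y, hxy, hx, hy, by simp [SimpleGraph.Walk.support_cons, hxs],
        by simp [SimpleGraph.Walk.support_cons, hys]⟩
    · exact ⟨u, w, h, ha, hw, by simp [SimpleGraph.Walk.support_cons],
        by simp [SimpleGraph.Walk.support_cons]⟩

lemma minority_le [Fintype V] {G : SimpleGraph V} {Y : Set V} (hY : WellConnected G Y)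
    {D : Set V} {u : V} {F : Set (Sym2 V)}
    (hcross : ∀ x y, G.Adj x y → x ∈ D → y ∉ D → x ≠ u → y ≠ u → s(x, y) ∈ F)
    (hYbig : 2 * (Nat.card F + 2) ≤ Nat.card Y) :
    Nat.card (Y ∩ D : Set V) ≤ Nat.card F + 1 ∨
    Nat.card (Y ∩ Dᶜ : Set V) ≤ Nat.card F + 1 := by
  classical
  by_contra hcon
  push_neg at hcon
  obtain ⟨h1, h2⟩ := hcon
  set s := Nat.card F + 2 with hs
  have hs1 : s ≤ (Y ∩ D).toFinset.card := by
    rw [Set.toFinset_card, ← Nat.card_eq_fintype_card]; omega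
  have hs2 : s ≤ (Y ∩ Dᶜ).toFinset.card := by
    rw [Set.toFinset_card, ← Nat.card_eq_fintype_card]; omega
  obtain ⟨X1, hX1sub, hX1card⟩ := Finset.exists_subset_card_eq hs1
  obtain ⟨X2, hX2sub, hX2card⟩ := Finset.exists_subset_card_eq hs2
  have hX1Y : ↑X1 ⊆ Y := fun x hx => by
    have := hX1sub hx; rw [Set.mem_toFinset] at this; exact this.1
  have hX2Y : ↑X2 ⊆ Y := fun x hx => by
    have := hX2sub hx; rw [Set.mem_toFinset] at this; exact this.1
  have hX1D : ∀ x ∈ X1, x ∈ D := fun x hx => by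
    have := hX1sub hx; rw [Set.mem_toFinset] at this; exact this.2
  have hX2D : ∀ x ∈ X2, x ∉ D := fun x hx => by
    have := hX2sub hx; rw [Set.mem_toFinset] at this; exact this.2
  have hple : X1.card ≤ Nat.card Y / 2 := by
    rw [hX1card]
    omega
  obtain ⟨a, b, w, hpath, ha, hb, hdisj⟩ :=
    hY.2 X1 X2 hX1Y hX2Y (by rw [hX1card, hX2card]) hple
  -- crossing pairs
  have hcr : ∀ i : Fin X1.card, ∃ x y, G.Adj x y ∧ x ∈ D ∧ y ∉ D ∧
      x ∈ (w i).support ∧ y ∈ (w i).support :=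
    fun i => walk_cross (w i) (hX1D _ (ha i)) (hX2D _ (hb i))
  choose xx yy hadj hxD hyD hxs hys using hcr
  set J : Finset (Fin X1.card) := Finset.univ.filter (fun i => u ∉ (w i).support) with hJ
  have hJcard : X1.card - 1 ≤ J.card := by
    have hcompl : (Finset.univ.filter (fun i : Fin X1.card => u ∈ (w i).support)).card ≤ 1 := by
      refine Finset.card_le_one.mpr fun i hi j hj => ?_
      simp only [Finset.mem_filter] at hi hj
      by_contra hij
      exact hdisj i j hij u hi.2 hj.2
    have := Finset.card_filter_add_card_filter_not
      (s := Finset.univ) (p := fun i : Fin X1.card => u ∈ (w i).support)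
    simp only [Finset.card_univ, Fintype.card_fin] at this
    have : J.card + (Finset.univ.filter (fun i : Fin X1.card => u ∈ (w i).support)).card
        ≥ X1.card := by
      rw [hJ]
      omega
    omega
  have hinj : Set.InjOn (fun i => s(xx i, yy i)) J := by
    intro i hi j hj hij
    by_contra hne
    have h1 : xx i ∈ (w j).support := by
      rcases Sym2.eq_iff.mp hij with ⟨h, _⟩ | ⟨h, _⟩
      · rw [h]; exact hxs j
      · rw [h]; exact hys j
    exact hdisj i j hne (xx i) (hxs i) h1
  have himg : ∀ i ∈ J, s(xx i, yy i) ∈ F.toFinset := by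
    intro i hi
    rw [hJ, Finset.mem_filter] at hi
    rw [Set.mem_toFinset]
    refine hcross _ _ (hadj i) (hxD i) (hyD i) ?_ ?_
    · intro h; exact hi.2 (h ▸ hxs i)
    · intro h; exact hi.2 (h ▸ hys i)
  have hcard : J.card ≤ F.toFinset.card := Finset.card_le_card_of_injOn _ himg hinj
  rw [Set.toFinset_card, ← Nat.card_eq_fintype_card] at hcard
  omega

lemma exists_important_aux {W : Type*} [Fintype W] (H : SimpleGraph W) (x y : W) :
    ∀ n (X : Set W), Fintype.card W - Nat.card X ≤ n →
    (SimpleGraph.induce X H).Connected → x ∈ X → y ∉ X →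
    ∃ X', X ⊆ X' ∧ ImportantSet H x y X' ∧ cutCard H X' ≤ cutCard H X := by
  classical
  have hcardle : ∀ X : Set W, Nat.card X ≤ Fintype.card W := by
    intro X
    rw [Nat.card_coe_set_eq, ← Nat.card_eq_fintype_card, ← Set.ncard_univ]
    exact Set.ncard_le_ncard (Set.subset_univ X) (Set.toFinite _)
  intro n
  induction n with
  | zero =>
    intro X hn hconn hx hy
    by_cases himp : ImportantSet H x y X
    · exact ⟨X, subset_rfl, himp, le_rfl⟩
    · exfalso
      have hex : ∃ X' : Set W, X ⊂ X' ∧ y ∉ X' ∧ (SimpleGraph.induce X' H).Connected ∧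
          cutCard H X' ≤ cutCard H X := not_not.mp fun h => himp ⟨hx, hy, hconn, h⟩
      obtain ⟨X', hss, _, _, _⟩ := hex
      have h1 : Nat.card X < Nat.card X' := by
        rw [Nat.card_coe_set_eq, Nat.card_coe_set_eq]
        exact Set.ncard_lt_ncard hss (Set.toFinite _)
      have := hcardle X'
      omega
  | succ n ih =>
    intro X hn hconn hx hy
    by_cases himp : ImportantSet H x y X
    · exact ⟨X, subset_rfl, himp, le_rfl⟩
    · have hex : ∃ X' : Set W, X ⊂ X' ∧ y ∉ X' ∧ (SimpleGraph.induce X' H).Connected ∧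
          cutCard H X' ≤ cutCard H X := not_not.mp fun h => himp ⟨hx, hy, hconn, h⟩
      obtain ⟨X', hss, hy', hconn', hcut'⟩ := hex
      have h1 : Nat.card X < Nat.card X' := by
        rw [Nat.card_coe_set_eq, Nat.card_coe_set_eq]
        exact Set.ncard_lt_ncard hss (Set.toFinite _)
      obtain ⟨X'', hsub, himp'', hcut''⟩ := ih X' (by omega) hconn' (hss.subset hx) hy'
      exact ⟨X'', hss.subset.trans hsub, himp'', hcut''.trans hcut'⟩

lemma exists_important {W : Type*} [Fintype W] (H : SimpleGraph W) (x y : W)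
    (X : Set W) (hconn : (SimpleGraph.induce X H).Connected) (hx : x ∈ X) (hy : y ∉ X) :
    ∃ X', X ⊆ X' ∧ ImportantSet H x y X' ∧ cutCard H X' ≤ cutCard H X :=
  exists_important_aux H x y (Fintype.card W) X (by omega) hconn hx hy

lemma addApex_adj_some {G : SimpleGraph V} {Y : Set V} {a b : V} :
    (addApex G Y).Adj (some a) (some b) ↔ G.Adj a b := by
  rw [addApex, SimpleGraph.fromRel_adj]
  constructor
  · rintro ⟨hne, h⟩
    rcases h with (⟨u', v', hu, hv, h⟩ | ⟨u', _, h, _⟩) | (⟨u', v', hu, hv, h⟩ | ⟨u', _, h, _⟩)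
    · rw [Option.some.injEq] at hu hv; cases hu; cases hv; exact h
    · exact absurd h (by simp)
    · rw [Option.some.injEq] at hu hv; cases hu; cases hv; exact h.symm
    · exact absurd h (by simp)
  · intro h
    exact ⟨fun he => G.loopless.irrefl a ((Option.some.injEq a b ▸ he : a = b) ▸ h),
      Or.inl (Or.inl ⟨a, b, rfl, rfl, h⟩)⟩

lemma addApex_adj_none {G : SimpleGraph V} {Y : Set V} {a : V} :
    (addApex G Y).Adj (some a) none ↔ a ∈ Y := by
  rw [addApex, SimpleGraph.fromRel_adj]
  constructor
  · rintro ⟨hne, h⟩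
    rcases h with (⟨u', v', _, hv, _⟩ | ⟨u', hu, _, h⟩) | (⟨u', v', hu, _, _⟩ | ⟨u', _, hn, _⟩)
    · exact absurd hv (by simp)
    · rw [Option.some.injEq] at hu; cases hu; exact h
    · exact absurd hu (by simp)
    · exact absurd hn (by simp)
  · intro h
    exact ⟨by simp, Or.inl (Or.inr ⟨a, rfl, rfl, h⟩)⟩

lemma walk_lift_supp {G : SimpleGraph V} {D : Set V}
    {c : (SimpleGraph.induce D G).ConnectedComponent} :
    ∀ {a' b' : D} (_ : (SimpleGraph.induce D G).Walk a' b') (ha : a' ∈ c.supp)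
      (hb : b' ∈ c.supp),
    (SimpleGraph.induce (Subtype.val '' c.supp) G).Reachable
      ⟨a'.val, ⟨a', ha, rfl⟩⟩ ⟨b'.val, ⟨b', hb, rfl⟩⟩ := by
  intro a' b' p
  induction p with
  | nil => intro ha hb; rfl
  | @cons u w _ h q ih =>
    intro ha hb
    have hw : w ∈ c.supp := by
      rw [SimpleGraph.ConnectedComponent.mem_supp_iff] at ha ⊢
      rw [← ha]
      exact (SimpleGraph.ConnectedComponent.connectedComponentMk_eq_of_adj h).symm
    refine (SimpleGraph.Adj.reachable ?_).trans (ih hw hb)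
    exact h

lemma comp_supp_induce_connected (G : SimpleGraph V) (D : Set V) (z : D) :
    (SimpleGraph.induce (Subtype.val ''
      ((SimpleGraph.induce D G).connectedComponentMk z).supp) G).Connected := by
  set c := (SimpleGraph.induce D G).connectedComponentMk z with hc
  have hz : z ∈ c.supp := rfl
  rw [SimpleGraph.connected_iff]
  refine ⟨?_, ?_⟩
  · rintro ⟨a, a', ha, rfl⟩ ⟨b, b', hb, rfl⟩
    rw [SimpleGraph.ConnectedComponent.mem_supp_iff] at ha hb
    have hr : (SimpleGraph.induce D G).Reachable a' b' := by
      rw [← SimpleGraph.ConnectedComponent.eq, ha, hb]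
    obtain ⟨p⟩ := hr
    exact walk_lift_supp p (by rw [SimpleGraph.ConnectedComponent.mem_supp_iff]; exact ha)
      (by rw [SimpleGraph.ConnectedComponent.mem_supp_iff]; exact hb)
  · exact ⟨⟨z.val, z, hz, rfl⟩⟩

lemma induce_some_connected {G : SimpleGraph V} {Y : Set V} {A : Set V}
    (h : (SimpleGraph.induce A G).Connected) :
    (SimpleGraph.induce (some '' A : Set (Option V)) (addApex G Y)).Connected := by
  have iso : SimpleGraph.induce A G ≃g
      SimpleGraph.induce (some '' A : Set (Option V)) (addApex G Y) := by
    refine ⟨Equiv.Set.image some A (Option.some_injective V), ?_⟩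
    rintro ⟨a, ha⟩ ⟨b, hb⟩
    show (addApex G Y).Adj (some a) (some b) ↔ G.Adj a b
    exact addApex_adj_some
  rw [← iso.connected_iff] at *
  exact h

lemma cut_bound [Fintype V] {G : SimpleGraph V} {Y A D : Set V} {u v : V} {F : Set (Sym2 V)}
    (hAD : A ⊆ D)
    (hclosed : ∀ x y, x ∈ A → G.Adj x y → y ∈ D → y ∈ A)
    (hbad : ∀ x y, x ∈ A → y ∉ D → G.Adj x y → s(x, y) ≠ s(u, v) → s(x, y) ∈ F) :
    cutCard (addApex G Y) (some '' A : Set (Option V))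
      ≤ Nat.card F + 1 + Nat.card (Y ∩ D : Set V) := by
  classical
  set S1 : Set (Sym2 (Option V)) := Sym2.map some '' F with hS1
  set S2 : Set (Sym2 (Option V)) := {s(some u, some v)} with hS2
  set S3 : Set (Sym2 (Option V)) := (fun y => s(some y, none)) '' (Y ∩ D) with hS3
  have hsub : {e : Sym2 (Option V) | e ∈ (addApex G Y).edgeSet ∧
      ∃ a b, e = s(a, b) ∧ a ∈ (some '' A : Set (Option V)) ∧ b ∉ (some '' A : Set (Option V))}
      ⊆ S1 ∪ S2 ∪ S3 := by
    rintro e ⟨hmem, a, b, rfl, haA, hbA⟩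
    obtain ⟨z, hz, rfl⟩ := haA
    have hadj : (addApex G Y).Adj (some z) b := (SimpleGraph.mem_edgeSet _).mp hmem
    cases b with
    | none =>
      have hzY : z ∈ Y := addApex_adj_none.mp hadj
      exact Or.inr ⟨z, ⟨hzY, hAD hz⟩, rfl⟩
    | some w =>
      have hGadj : G.Adj z w := addApex_adj_some.mp hadj
      have hwA : w ∉ A := fun hw => hbA ⟨w, hw, rfl⟩
      by_cases heq : s(z, w) = s(u, v)
      · left; right
        rw [hS2, Set.mem_singleton_iff]
        rcases Sym2.eq_iff.mp heq with ⟨h1, h2⟩ | ⟨h1, h2⟩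
        · rw [h1, h2]
        · rw [h1, h2, Sym2.eq_swap]
      · have hwD : w ∉ D := fun hw => hwA (hclosed z w hz hGadj hw)
        left; left
        exact ⟨s(z, w), hbad z w hz hwD hGadj heq, by rw [Sym2.map_pair_eq]⟩
  have h1 : cutCard (addApex G Y) (some '' A : Set (Option V))
      ≤ (S1 ∪ S2 ∪ S3).ncard := by
    rw [cutCard, Nat.card_coe_set_eq]
    exact Set.ncard_le_ncard hsub (Set.toFinite _)
  have h2 : (S1 ∪ S2 ∪ S3).ncard ≤ S1.ncard + S2.ncard + S3.ncard := by
    calc (S1 ∪ S2 ∪ S3).ncard ≤ (S1 ∪ S2).ncard + S3.ncard := Set.ncard_union_le _ _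
      _ ≤ S1.ncard + S2.ncard + S3.ncard := by
          have := Set.ncard_union_le S1 S2
          omega
  have h3 : S1.ncard ≤ Nat.card F := by
    calc S1.ncard ≤ F.ncard := Set.ncard_image_le (Set.toFinite _)
      _ = Nat.card F := (Nat.card_coe_set_eq F).symm
  have h4 : S2.ncard = 1 := Set.ncard_singleton _
  have h5 : S3.ncard ≤ Nat.card (Y ∩ D : Set V) := by
    calc S3.ncard ≤ (Y ∩ D).ncard := Set.ncard_image_le (Set.toFinite _)
      _ = Nat.card (Y ∩ D : Set V) := (Nat.card_coe_set_eq _).symm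
  omega

lemma main_case [Fintype V] (G : SimpleGraph V) (Y T1 T2 : Set V) (k : ℕ) (u v : V)
    (φ : V → Fin 2) (cc : V → Fin 2)
    (hproper : ∀ a b, G.Adj a b → cc a ≠ cc b)
    (hφuv : φ u = φ v)
    (hext : IsExtension φ T1 T2)
    (hcost : cost (G.deleteEdges {s(u, v)}) φ ≤ k)
    (hk : 1 ≤ k)
    (hminor : Nat.card (Y ∩ {x | φ x ≠ cc x} : Set V)
      ≤ Nat.card (badGraph (G.deleteEdges {s(u, v)}) φ).edgeSet + 1)
    (hEbound : Nat.card (badGraph (G.deleteEdges {s(u, v)}) φ).edgeSet ≤ 2 * k ^ 2 - k)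
    (hw₀D : φ u ≠ cc u)
    (hu : some u ∉ importantUnion G Y (T1 ∪ T2) (4 * k ^ 2)) :
    ∃ ψ : V → Fin 2, IsExtension ψ T1 T2 ∧ cost G ψ ≤ k := by
  classical
  have fin2 : ∀ a b d : Fin 2, ¬a = b → ¬d = b → a = d := by decide
  set G' := G.deleteEdges {s(u, v)} with hG'
  set F := (badGraph G' φ).edgeSet with hF
  set D : Set V := {x | φ x ≠ cc x} with hD
  have huD : u ∈ D := hw₀D
  set zD : D := ⟨u, huD⟩ with hzD
  set A : Set V := Subtype.val '' ((SimpleGraph.induce D G).connectedComponentMk zD).supp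
    with hA
  have huA : u ∈ A := ⟨zD, rfl, rfl⟩
  have hAD : A ⊆ D := by rintro x ⟨x', _, rfl⟩; exact x'.2
  have hclosed : ∀ x y, x ∈ A → G.Adj x y → y ∈ D → y ∈ A := by
    rintro x y ⟨x', hx', rfl⟩ hadj hyD
    refine ⟨⟨y, hyD⟩, ?_, rfl⟩
    rw [SimpleGraph.ConnectedComponent.mem_supp_iff] at hx' ⊢
    rw [← hx']
    exact (SimpleGraph.ConnectedComponent.connectedComponentMk_eq_of_adj
      (by exact hadj.symm : (SimpleGraph.induce D G).Adj ⟨y, hyD⟩ x')).symm ▸ rfl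
  have hbadA : ∀ x y, x ∈ A → y ∉ D → G.Adj x y → s(x, y) ≠ s(u, v) → s(x, y) ∈ F := by
    intro x y hxA hyD hadj hne
    have hxD : x ∈ D := hAD hxA
    have hbad : φ x = φ y := by
      have h1 : φ y = cc y := not_not.mp hyD
      have h3 : ¬ φ y = cc x := fun he => hproper y x hadj.symm (h1.symm.trans he)
      exact fin2 (φ x) (cc x) (φ y) hxD h3
    refine (SimpleGraph.mem_edgeSet _).mpr (badGraph_adj.mpr ⟨?_, hbad⟩)
    rw [hG', SimpleGraph.deleteEdges_adj]
    exact ⟨hadj, fun hm => hne (Set.mem_singleton_iff.mp hm)⟩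
  have hcut : cutCard (addApex G Y) (some '' A : Set (Option V))
      ≤ Nat.card F + 1 + Nat.card (Y ∩ D : Set V) :=
    cut_bound hAD hclosed hbadA
  have hcut4 : cutCard (addApex G Y) (some '' A : Set (Option V)) ≤ 4 * k ^ 2 := by
    have h1 : 1 ≤ k ^ 2 := Nat.one_le_pow _ _ hk
    omega
  have hAT : ∀ x, x ∈ A → x ∉ T1 ∪ T2 := by
    intro x hxA hxT
    have hconnA : (SimpleGraph.induce A G).Connected :=
      comp_supp_induce_connected G D zD
    have hconn2 : (SimpleGraph.induce (some '' A : Set (Option V)) (addApex G Y)).Connected :=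
      induce_some_connected hconnA
    have hnone : (none : Option V) ∉ (some '' A : Set (Option V)) := by
      rintro ⟨w, _, hw⟩; simp at hw
    obtain ⟨X', hsub, himp, hcutle⟩ := exists_important (addApex G Y) (some x) none
      (some '' A) hconn2 ⟨x, hxA, rfl⟩ hnone
    exact hu ⟨x, hxT, X', himp, hcutle.trans hcut4, hsub ⟨u, huA, rfl⟩⟩
  set ψ : V → Fin 2 := fun w => if w ∈ A then cc w else φ w with hψ
  have hψext : IsExtension ψ T1 T2 := by
    constructor
    · intro x hx
      rw [hψ]
      simp only
      rw [if_neg (fun hxA => hAT x hxA (Or.inl hx))]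
      exact hext.1 x hx
    · intro x hx
      rw [hψ]
      simp only
      rw [if_neg (fun hxA => hAT x hxA (Or.inr hx))]
      exact hext.2 x hx
  have hle : badGraph G ψ ≤ badGraph G' φ := by
    intro a b hab
    obtain ⟨hadj, heq⟩ := badGraph_adj.mp hab
    by_cases haA : a ∈ A <;> by_cases hbA : b ∈ A
    · exfalso
      rw [hψ] at heq
      simp only [if_pos haA, if_pos hbA] at heq
      exact hproper a b hadj heq
    · exfalso
      have hbD : b ∉ D := fun hbD => hbA (hclosed a b haA hadj hbD)
      have h1 : φ b = cc b := not_not.mp hbD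
      rw [hψ] at heq
      simp only [if_pos haA, if_neg hbA] at heq
      exact hproper a b hadj (heq.trans h1)
    · exfalso
      have haD : a ∉ D := fun haD => haA (hclosed b a hbA hadj.symm haD)
      have h1 : φ a = cc a := not_not.mp haD
      rw [hψ] at heq
      simp only [if_neg haA, if_pos hbA] at heq
      exact hproper a b hadj ((h1.symm.trans heq).symm).symm
    · rw [hψ] at heq
      simp only [if_neg haA, if_neg hbA] at heq
      refine badGraph_adj.mpr ⟨?_, heq⟩
      rw [hG', SimpleGraph.deleteEdges_adj]
      refine ⟨hadj, fun hm => ?_⟩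
      rw [Set.mem_singleton_iff] at hm
      rcases Sym2.eq_iff.mp hm with ⟨h1, _⟩ | ⟨_, h2⟩
      · exact haA (h1 ▸ huA)
      · exact hbA (h2 ▸ huA)
  exact ⟨ψ, hψext, (cost_mono hle).trans hcost⟩

/-- if `uv ∈ E(G)` with `u ∉ Z` and `v ∉ Z` (and `G - uv` connected), then `G`
has a `(T₁,T₂)`-extension of cost at most `k` iff `G - uv` does. -/
theorem stmt12 {V : Type*} [Fintype V] (G : SimpleGraph V) (hbip : G.Colorable 2)
    (k t : ℕ) (hk : 1 ≤ k)
    (T1 T2 : Set V) (hdisj : Disjoint T1 T2) (hne : (T1 ∪ T2).Nonempty)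
    (ht : Nat.card T1 + Nat.card T2 ≤ t)
    (Y : Set V) (hY : WellConnected G Y)
    (hYcard : 2 * (4 * k ^ 2) * t * 4 ^ (4 * k ^ 2) + 2 ≤ Nat.card Y)
    (u v : V) (huv : G.Adj u v)
    (hu : some u ∉ importantUnion G Y (T1 ∪ T2) (4 * k ^ 2))
    (hv : some v ∉ importantUnion G Y (T1 ∪ T2) (4 * k ^ 2))
    (hconn : (G.deleteEdges {s(u, v)}).Connected) :
    (∃ φ : V → Fin 2, IsExtension φ T1 T2 ∧ cost G φ ≤ k) ↔
    (∃ φ : V → Fin 2, IsExtension φ T1 T2 ∧ cost (G.deleteEdges {s(u, v)}) φ ≤ k) := by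
  classical
  constructor
  · rintro ⟨φ, hext, hc⟩
    refine ⟨φ, hext, le_trans (cost_mono ?_) hc⟩
    intro a b hab
    exact badGraph_adj.mpr ⟨((SimpleGraph.deleteEdges_adj).mp (badGraph_adj.mp hab).1).1, (badGraph_adj.mp hab).2⟩
  · rintro ⟨φ, hext, hc⟩
    by_cases hgood : φ u = φ v
    swap
    · refine ⟨φ, hext, le_trans (cost_mono ?_) hc⟩
      intro a b hab
      replace hab := badGraph_adj.mp hab
      refine badGraph_adj.mpr ⟨?_, hab.2⟩
      rw [SimpleGraph.deleteEdges_adj]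
      refine ⟨hab.1, fun hm => ?_⟩
      rw [Set.mem_singleton_iff] at hm
      rcases Sym2.eq_iff.mp hm with ⟨h1, h2⟩ | ⟨h1, h2⟩
      · exact hgood (h1 ▸ h2 ▸ hab.2)
      · exact hgood (h1 ▸ h2 ▸ hab.2).symm
    · obtain ⟨c⟩ := hbip
      have fin2 : ∀ a b d : Fin 2, ¬a = b → ¬d = b → a = d := by decide
      have hflip : ∀ a b : Fin 2, a ≠ b → 1 - a ≠ 1 - b := by decide
      have hflipinj : ∀ a b : Fin 2, 1 - a = 1 - b → a = b := by decide
      have hcomp : ∀ a b : Fin 2, (¬ a ≠ b) ↔ a ≠ 1 - b := by decide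
      set G' := G.deleteEdges {s(u, v)} with hG'
      set F := (badGraph G' φ).edgeSet with hF
      set E := Nat.card F with hE
      have hEk : E ≤ 2 * k ^ 2 - k := by
        rw [hE, hF]
        have h := edge_card_le hc
        have h2 : 2 * k * k = 2 * k ^ 2 := by ring
        omega
      have ht1 : 1 ≤ t := by
        obtain ⟨x0, hx0⟩ := hne
        rcases hx0 with h | h
        · haveI : Nonempty T1 := ⟨⟨x0, h⟩⟩
          have := Nat.card_pos (α := T1)
          omega
        · haveI : Nonempty T2 := ⟨⟨x0, h⟩⟩
          have := Nat.card_pos (α := T2)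
          omega
      have hk2 : 1 ≤ k ^ 2 := Nat.one_le_pow _ _ hk
      have hYbig : 2 * (E + 2) ≤ Nat.card Y := by
        have hP : (4 : ℕ) ≤ 4 ^ (4 * k ^ 2) := by
          calc (4 : ℕ) = 4 ^ 1 := (pow_one 4).symm
            _ ≤ 4 ^ (4 * k ^ 2) := Nat.pow_le_pow_right (by norm_num) (by omega)
        have hmul : 2 * (4 * k ^ 2) * 1 * 4 ≤ 2 * (4 * k ^ 2) * t * 4 ^ (4 * k ^ 2) :=
          Nat.mul_le_mul (Nat.mul_le_mul_left _ ht1) hP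
        have h32 : 32 * k ^ 2 + 2 ≤ Nat.card Y := by
          calc 32 * k ^ 2 + 2 = 2 * (4 * k ^ 2) * 1 * 4 + 2 := by ring
            _ ≤ 2 * (4 * k ^ 2) * t * 4 ^ (4 * k ^ 2) + 2 := Nat.add_le_add_right hmul 2
            _ ≤ Nat.card Y := hYcard
        omega
      set cc0 : V → Fin 2 := fun x => c x with hcc0
      set cc1 : V → Fin 2 := fun x => 1 - c x with hcc1
      have hprop0 : ∀ a b, G.Adj a b → cc0 a ≠ cc0 b := fun a b h => c.valid h
      have hprop1 : ∀ a b, G.Adj a b → cc1 a ≠ cc1 b := fun a b h => hflip _ _ (c.valid h)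
      set D0 : Set V := {x | φ x ≠ cc0 x} with hD0
      have hcross0 : ∀ x y, G.Adj x y → x ∈ D0 → y ∉ D0 → x ≠ u → y ≠ u → s(x, y) ∈ F := by
        intro x y hadj hxD hyD hxu hyu
        have h1 : φ y = cc0 y := not_not.mp hyD
        have hbad : φ x = φ y :=
          fin2 (φ x) (cc0 x) (φ y) hxD (fun he => hprop0 y x hadj.symm (h1.symm.trans he))
        refine (SimpleGraph.mem_edgeSet _).mpr (badGraph_adj.mpr ⟨?_, hbad⟩)
        rw [hG', SimpleGraph.deleteEdges_adj]
        refine ⟨hadj, fun hm => ?_⟩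
        rw [Set.mem_singleton_iff] at hm
        rcases Sym2.eq_iff.mp hm with ⟨h1', _⟩ | ⟨_, h2'⟩
        · exact hxu h1'
        · exact hyu h2'
      have hminor := minority_le hY hcross0 hYbig
      have hsetswap : G.deleteEdges {s(v, u)} = G.deleteEdges {s(u, v)} := by
        rw [Sym2.eq_swap]
      rcases hminor with hm0 | hm1
      · by_cases hu0 : φ u ≠ cc0 u
        · exact main_case G Y T1 T2 k u v φ cc0 hprop0 hgood hext hc hk hm0 hEk hu0 hu
        · have hv0 : φ v ≠ cc0 v := by
            rw [not_not] at hu0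
            intro h
            exact c.valid huv (hu0.symm.trans (hgood.trans h))
          have := main_case G Y T1 T2 k v u φ cc0 hprop0 hgood.symm hext
            (by rw [hsetswap]; exact hc) hk
            (by rw [hsetswap]; exact hm0) (by rw [hsetswap]; exact hEk) hv0 hv
          exact this
      · have hDc : (D0ᶜ : Set V) = {x | φ x ≠ cc1 x} := by
          ext x
          simp only [Set.mem_compl_iff, hD0, Set.mem_setOf_eq, hcc1, hcc0]
          exact hcomp (φ x) (c x)
        rw [hDc] at hm1
        by_cases hu1 : φ u ≠ cc1 u
        · exact main_case G Y T1 T2 k u v φ cc1 hprop1 hgood hext hc hk hm1 hEk hu1 hu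
        · have hv1 : φ v ≠ cc1 v := by
            rw [not_not] at hu1
            intro h
            exact c.valid huv (hflipinj _ _ (hu1.symm.trans (hgood.trans h)))
          have := main_case G Y T1 T2 k v u φ cc1 hprop1 hgood.symm hext
            (by rw [hsetswap]; exact hc) hk
            (by rw [hsetswap]; exact hm1) (by rw [hsetswap]; exact hEk) hv1 hv
          exact this
end

section
/- Let G be a finite simple graph, let k and t be natural numbers, let T1 and T2 be disjoint subsets of V(G) with |T1| + |T2| ≤ t, and let Y ⊆ V(G). Let G* be the graph obtained from G by adding a new vertex y* adjacent to exactly the vertices of Y, and let Z be the union, over all x ∈ T1 ∪ T2, of all (x,y*)-important sets X in G* with d_{G*}(X) ≤ 4k². Then d_{G*}(Z) ≤ (4k²)·t·4^(4k²) (hence also d_G(Z) ≤ (4k²)·t·4^(4k²)) and |Z ∩ Y| ≤ (4k²)·t·4^(4k²). -/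
open scoped Classical

variable {V : Type*}

section Aux
set_option linter.unusedSectionVars false

variable {W : Type*} [Fintype W]

/-- The set of edges crossing `X`. -/
def cutSet (H : SimpleGraph W) (X : Set W) : Set (Sym2 W) :=
  {e | e ∈ H.edgeSet ∧ ∃ a b, e = s(a, b) ∧ a ∈ X ∧ b ∉ X}

lemma cutCard_eq (H : SimpleGraph W) (X : Set W) : cutCard H X = (cutSet H X).ncard :=
  Nat.card_coe_set_eq _

lemma mem_cutSet {H : SimpleGraph W} {X : Set W} {a b : W} :
    s(a, b) ∈ cutSet H X ↔ H.Adj a b ∧ ((a ∈ X ∧ b ∉ X) ∨ (b ∈ X ∧ a ∉ X)) := by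
  constructor
  · rintro ⟨he, c, d, hcd, hc, hd⟩
    refine ⟨H.mem_edgeSet.1 he, ?_⟩
    rcases Sym2.eq_iff.1 hcd with ⟨rfl, rfl⟩ | ⟨rfl, rfl⟩
    · exact Or.inl ⟨hc, hd⟩
    · exact Or.inr ⟨hc, hd⟩
  · rintro ⟨hadj, h | h⟩
    · exact ⟨H.mem_edgeSet.2 hadj, a, b, rfl, h.1, h.2⟩
    · exact ⟨H.mem_edgeSet.2 hadj, b, a, Sym2.eq_swap.symm, h.1, h.2⟩

lemma mem_cutSet' {H : SimpleGraph W} {X : Set W} {e : Sym2 W} :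
    e ∈ cutSet H X ↔ ∃ a b, H.Adj a b ∧ e = s(a, b) ∧ a ∈ X ∧ b ∉ X := by
  constructor
  · rintro ⟨he, a, b, rfl, ha, hb⟩
    exact ⟨a, b, H.mem_edgeSet.1 he, rfl, ha, hb⟩
  · rintro ⟨a, b, hadj, rfl, ha, hb⟩
    exact ⟨H.mem_edgeSet.2 hadj, a, b, rfl, ha, hb⟩

lemma cutCard_eq_sum (H : SimpleGraph W) (X : Set W) :
    cutCard H X = ∑ e : Sym2 W, if e ∈ cutSet H X then 1 else 0 := by
  classical
  rw [cutCard_eq, Set.ncard_eq_toFinset_card']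
  have : (cutSet H X).toFinset = Finset.univ.filter (fun e => e ∈ cutSet H X) := by
    ext e; simp
  rw [this, Finset.card_filter]

lemma cut_submodular (H : SimpleGraph W) (A B : Set W) :
    cutCard H (A ∪ B) + cutCard H (A ∩ B) ≤ cutCard H A + cutCard H B := by
  classical
  simp only [cutCard_eq_sum]
  rw [← Finset.sum_add_distrib, ← Finset.sum_add_distrib]
  refine Finset.sum_le_sum ?_
  intro e _
  induction e using Sym2.inductionOn with
  | hf a b =>
    by_cases hadj : H.Adj a b
    · simp only [mem_cutSet, hadj, true_and, Set.mem_union, Set.mem_inter_iff]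
      by_cases ha : a ∈ A <;> by_cases hb : b ∈ A <;> by_cases ha' : a ∈ B <;>
        by_cases hb' : b ∈ B <;> simp [ha, hb, ha', hb']
    · simp [mem_cutSet, hadj]

lemma cutSet_subset_ncard_le {H : SimpleGraph W} {A B : Set W}
    (h : cutSet H A ⊆ cutSet H B) : cutCard H A ≤ cutCard H B := by
  rw [cutCard_eq, cutCard_eq]
  exact Set.ncard_le_ncard h (Set.toFinite _)


/-- deleting one edge -/
lemma cutSet_deleteEdges (H : SimpleGraph W) (e : Sym2 W) (X : Set W) :
    cutSet (H.deleteEdges {e}) X = cutSet H X \ {e} := by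
  ext f
  constructor
  · rintro ⟨hf, h⟩
    rw [SimpleGraph.edgeSet_deleteEdges] at hf
    exact ⟨⟨hf.1, h⟩, hf.2⟩
  · rintro ⟨⟨hf, h⟩, hne⟩
    refine ⟨?_, h⟩
    rw [SimpleGraph.edgeSet_deleteEdges]
    exact ⟨hf, hne⟩

lemma cutCard_deleteEdges_le (H : SimpleGraph W) (e : Sym2 W) (X : Set W) :
    cutCard (H.deleteEdges {e}) X ≤ cutCard H X := by
  rw [cutCard_eq, cutCard_eq, cutSet_deleteEdges]
  exact Set.ncard_le_ncard Set.diff_subset (Set.toFinite _)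

lemma cutCard_le_deleteEdges_add_one (H : SimpleGraph W) (e : Sym2 W) (X : Set W) :
    cutCard H X ≤ cutCard (H.deleteEdges {e}) X + 1 := by
  rw [cutCard_eq, cutCard_eq, cutSet_deleteEdges]
  by_cases he : e ∈ cutSet H X
  · rw [Set.ncard_diff_singleton_of_mem he]
    have : 0 < (cutSet H X).ncard :=
      (Set.ncard_pos (Set.toFinite _)).2 ⟨e, he⟩
    omega
  · rw [Set.diff_singleton_eq_self he]
    omega

lemma cutCard_deleteEdges_of_mem (H : SimpleGraph W) {e : Sym2 W} {X : Set W}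
    (he : e ∈ cutSet H X) :
    cutCard (H.deleteEdges {e}) X + 1 = cutCard H X := by
  rw [cutCard_eq, cutCard_eq, cutSet_deleteEdges,
    Set.ncard_diff_singleton_of_mem he]
  have : 0 < (cutSet H X).ncard :=
    (Set.ncard_pos (Set.toFinite _)).2 ⟨e, he⟩
  omega

/-- Connectivity of a set via walks staying inside it. -/
def ConnOn (H : SimpleGraph W) (X : Set W) : Prop :=
  X.Nonempty ∧ ∀ a ∈ X, ∀ b ∈ X, ∃ w : H.Walk a b, ∀ z ∈ w.support, z ∈ X

lemma induce_reachable {H : SimpleGraph W} {X : Set W} :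
    ∀ {a b : W} (w : H.Walk a b), (∀ z ∈ w.support, z ∈ X) → ∀ (ha : a ∈ X) (hb : b ∈ X),
      (SimpleGraph.induce X H).Reachable ⟨a, ha⟩ ⟨b, hb⟩ := by
  intro a b w
  induction w with
  | nil => intro _ ha hb; exact SimpleGraph.Reachable.refl _
  | @cons u v c h p ih =>
    intro hw ha hb
    have hv : v ∈ X := hw v (by simp [SimpleGraph.Walk.support_cons])
    have h1 : (SimpleGraph.induce X H).Adj ⟨u, ha⟩ ⟨v, hv⟩ := h
    exact h1.reachable.trans
      (ih (fun z hz => hw z (by simp [SimpleGraph.Walk.support_cons, hz])) hv hb)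

lemma connOn_iff (H : SimpleGraph W) (X : Set W) :
    ConnOn H X ↔ (SimpleGraph.induce X H).Connected := by
  constructor
  · rintro ⟨⟨x0, hx0⟩, hconn⟩
    rw [SimpleGraph.connected_iff]
    refine ⟨?_, ⟨⟨x0, hx0⟩⟩⟩
    rintro ⟨a, ha⟩ ⟨b, hb⟩
    obtain ⟨w, hw⟩ := hconn a ha b hb
    exact induce_reachable w hw ha hb
  · intro hc
    have hne : X.Nonempty := by
      obtain ⟨⟨x, hx⟩⟩ := hc.nonempty
      exact ⟨x, hx⟩
    refine ⟨hne, fun a ha b hb => ?_⟩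
    obtain ⟨w⟩ := hc.preconnected ⟨a, ha⟩ ⟨b, hb⟩
    refine ⟨w.map (⟨Subtype.val, fun h => h⟩ : (SimpleGraph.induce X H) →g H), ?_⟩
    intro z hz
    rw [SimpleGraph.Walk.support_map, List.mem_map] at hz
    obtain ⟨⟨z', hz'⟩, _, rfl⟩ := hz
    exact hz'

lemma ConnOn.mono {H H' : SimpleGraph W} {X : Set W} (hle : H ≤ H') (h : ConnOn H X) :
    ConnOn H' X := by
  refine ⟨h.1, fun a ha b hb => ?_⟩
  obtain ⟨w, hw⟩ := h.2 a ha b hb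
  refine ⟨w.transfer H' (fun e he => ?_), ?_⟩
  · exact SimpleGraph.edgeSet_subset_edgeSet.2 hle (w.edges_subset_edgeSet he)
  · rw [SimpleGraph.Walk.support_transfer]
    exact hw

lemma ConnOn.union {H : SimpleGraph W} {A B : Set W} (hA : ConnOn H A) (hB : ConnOn H B)
    (hAB : (A ∩ B).Nonempty) : ConnOn H (A ∪ B) := by
  obtain ⟨z, hzA, hzB⟩ := hAB
  have key : ∀ c ∈ A ∪ B, ∃ w : H.Walk c z, ∀ x ∈ w.support, x ∈ A ∪ B := by
    rintro c (hc | hc)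
    · obtain ⟨w, hw⟩ := hA.2 c hc z hzA
      exact ⟨w, fun x hx => Or.inl (hw x hx)⟩
    · obtain ⟨w, hw⟩ := hB.2 c hc z hzB
      exact ⟨w, fun x hx => Or.inr (hw x hx)⟩
  refine ⟨⟨z, Or.inl hzA⟩, fun a ha b hb => ?_⟩
  obtain ⟨wa, hwa⟩ := key a ha
  obtain ⟨wb, hwb⟩ := key b hb
  refine ⟨wa.append wb.reverse, fun x hx => ?_⟩
  rw [SimpleGraph.Walk.mem_support_append_iff] at hx
  rcases hx with hx | hx
  · exact hwa x hx
  · rw [SimpleGraph.Walk.support_reverse, List.mem_reverse] at hx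
    exact hwb x hx

lemma connOn_singleton (H : SimpleGraph W) (x : W) : ConnOn H {x} := by
  refine ⟨⟨x, rfl⟩, ?_⟩
  rintro a rfl b rfl
  exact ⟨SimpleGraph.Walk.nil, by simp⟩

lemma connOn_pair {H : SimpleGraph W} {u v : W} (h : H.Adj u v) : ConnOn H {u, v} := by
  refine ⟨⟨u, Or.inl rfl⟩, ?_⟩
  intro a ha b hb
  rcases ha with rfl | rfl <;> rcases hb with rfl | rfl
  · exact ⟨SimpleGraph.Walk.nil, by simp⟩
  · exact ⟨h.toWalk, by intro z hz; simpa using hz⟩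
  · exact ⟨h.symm.toWalk, by intro z hz; simp at hz; tauto⟩
  · exact ⟨SimpleGraph.Walk.nil, by simp⟩

lemma ConnOn.insert {H : SimpleGraph W} {X : Set W} (hX : ConnOn H X) {u v : W}
    (hu : u ∈ X) (h : H.Adj u v) : ConnOn H (X ∪ {v}) := by
  have h1 : ConnOn H (X ∪ {u, v}) := hX.union (connOn_pair h) ⟨u, hu, Or.inl rfl⟩
  have h2 : X ∪ {u, v} = X ∪ {v} := by
    ext z
    simp only [Set.mem_union, Set.mem_insert_iff, Set.mem_singleton_iff]
    constructor
    · rintro (hz | rfl | rfl)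
      · exact Or.inl hz
      · exact Or.inl hu
      · exact Or.inr rfl
    · rintro (hz | rfl)
      · exact Or.inl hz
      · exact Or.inr (Or.inr rfl)
  rwa [h2] at h1

lemma connOn_deleteEdge {H : SimpleGraph W} {X : Set W} {u v : W} (hv : v ∉ X)
    (h : ConnOn H X) : ConnOn (H.deleteEdges {s(u, v)}) X := by
  refine ⟨h.1, fun a ha b hb => ?_⟩
  obtain ⟨w, hw⟩ := h.2 a ha b hb
  refine ⟨w.transfer _ (fun e he => ?_), ?_⟩
  · rw [SimpleGraph.edgeSet_deleteEdges]
    refine ⟨w.edges_subset_edgeSet he, ?_⟩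
    intro hee
    rw [Set.mem_singleton_iff] at hee
    subst hee
    exact hv (hw v (w.snd_mem_support_of_mem_edges he))
  · rw [SimpleGraph.Walk.support_transfer]
    exact hw

lemma walk_closed {H : SimpleGraph W} {X : Set W}
    (hcl : ∀ a ∈ X, ∀ b, H.Adj a b → b ∈ X) :
    ∀ {a b : W}, H.Walk a b → a ∈ X → b ∈ X := by
  intro a b w
  induction w with
  | nil => exact id
  | @cons u v c h p ih => intro hu; exact ih (hcl u hu v h)


/-- The set of vertices reachable from `S` by walks inside `D`. -/
def reachIn (H : SimpleGraph W) (D S : Set W) : Set W :=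
  {w | ∃ s ∈ S, ∃ p : H.Walk s w, ∀ z ∈ p.support, z ∈ D}

lemma subset_reachIn {H : SimpleGraph W} {D S : Set W} (hSD : S ⊆ D) : S ⊆ reachIn H D S :=
  fun s hs => ⟨s, hs, SimpleGraph.Walk.nil, by simpa using hSD hs⟩

lemma reachIn_subset {H : SimpleGraph W} {D S : Set W} : reachIn H D S ⊆ D := by
  rintro w ⟨s, _, p, hp⟩
  exact hp w p.end_mem_support

lemma support_subset_reachIn {H : SimpleGraph W} {D S : Set W} {s w : W} (hs : s ∈ S)
    (p : H.Walk s w) (hp : ∀ z ∈ p.support, z ∈ D) : ∀ z ∈ p.support, z ∈ reachIn H D S := by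
  classical
  intro z hz
  exact ⟨s, hs, p.takeUntil z hz, fun x hx => hp x (p.support_takeUntil_subset hz hx)⟩

lemma reachIn_connOn {H : SimpleGraph W} {D S : Set W} (hS : ConnOn H S) (hSD : S ⊆ D) :
    ConnOn H (reachIn H D S) := by
  obtain ⟨⟨s0, hs0⟩, hSc⟩ := hS
  refine ⟨⟨s0, subset_reachIn hSD hs0⟩, ?_⟩
  rintro a ⟨sa, hsa, pa, hpa⟩ b ⟨sb, hsb, pb, hpb⟩
  obtain ⟨q, hq⟩ := hSc sa hsa sb hsb
  refine ⟨(pa.reverse.append q).append pb, ?_⟩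
  intro z hz
  rw [SimpleGraph.Walk.mem_support_append_iff] at hz
  rcases hz with hz | hz
  · rw [SimpleGraph.Walk.mem_support_append_iff] at hz
    rcases hz with hz | hz
    · rw [SimpleGraph.Walk.support_reverse, List.mem_reverse] at hz
      exact support_subset_reachIn hsa pa hpa z hz
    · exact subset_reachIn hSD (hq z hz)
  · exact support_subset_reachIn hsb pb hpb z hz

lemma reachIn_closed {H : SimpleGraph W} {D S : Set W} {a b : W}
    (ha : a ∈ reachIn H D S) (hadj : H.Adj a b) (hb : b ∈ D) : b ∈ reachIn H D S := by
  obtain ⟨s, hs, p, hp⟩ := ha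
  refine ⟨s, hs, p.concat hadj, ?_⟩
  intro z hz
  rw [SimpleGraph.Walk.support_concat, List.mem_append] at hz
  rcases hz with hz | hz
  · exact hp z hz
  · rw [List.mem_singleton] at hz
    subst hz
    exact hb

lemma cutSet_reachIn_subset {H : SimpleGraph W} {D S : Set W} :
    cutSet H (reachIn H D S) ⊆ cutSet H D := by
  intro e he
  rw [mem_cutSet'] at he ⊢
  obtain ⟨a, b, hadj, rfl, ha, hb⟩ := he
  refine ⟨a, b, hadj, rfl, reachIn_subset ha, fun hbD => hb (reachIn_closed ha hadj hbD)⟩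

/-- Existence of the maximal minimum-cut valid superset `Xs` of `S`. -/
lemma exists_star (H : SimpleGraph W) (y : W) (S : Set W) (hSc : ConnOn H S)
    (hne : ∃ X0 : Set W, y ∉ X0 ∧ ConnOn H X0 ∧ S ⊆ X0) :
    ∃ Xs : Set W, (y ∉ Xs ∧ ConnOn H Xs ∧ S ⊆ Xs) ∧
      (∀ X : Set W, y ∉ X → ConnOn H X → S ⊆ X → cutCard H Xs ≤ cutCard H X) ∧
      (∀ X : Set W, y ∉ X → ConnOn H X → S ⊆ X → cutCard H X ≤ cutCard H Xs → X ⊆ Xs) := by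
  classical
  set Λ : Set (Set W) := {X | y ∉ X ∧ ConnOn H X ∧ S ⊆ X} with hΛ
  have hΛne : Λ.Nonempty := hne
  obtain ⟨X0, hX0Λ, hX0min⟩ := Set.exists_min_image Λ (cutCard H) (Set.toFinite _) hΛne
  set M : Set (Set W) := {X ∈ Λ | cutCard H X = cutCard H X0} with hM
  have hMne : M.Nonempty := ⟨X0, hX0Λ, rfl⟩
  obtain ⟨Xs, hXsM, hXsmax⟩ := Set.Finite.exists_maximalFor id M (Set.toFinite _) hMne
  obtain ⟨⟨hXsy, hXsc, hXsS⟩, hXscard⟩ := hXsM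
  have hmin : ∀ X : Set W, y ∉ X → ConnOn H X → S ⊆ X → cutCard H Xs ≤ cutCard H X := by
    intro X h1 h2 h3
    rw [hXscard]
    exact hX0min X ⟨h1, h2, h3⟩
  refine ⟨Xs, ⟨hXsy, hXsc, hXsS⟩, hmin, ?_⟩
  intro X h1 h2 h3 hcard
  -- X is also a minimizer; show X ⊆ Xs
  have hXmin : cutCard H X = cutCard H Xs :=
    le_antisymm hcard (hmin X h1 h2 h3)
  -- consider C = reach component of S in X ∩ Xs
  set C : Set W := reachIn H (X ∩ Xs) S with hC
  have hSsub : S ⊆ X ∩ Xs := fun s hs => ⟨h3 hs, hXsS hs⟩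
  have hCc : ConnOn H C := reachIn_connOn hSc hSsub
  have hCy : y ∉ C := fun hy => h1 (reachIn_subset hy).1
  have hCS : S ⊆ C := subset_reachIn hSsub
  have hCmin : cutCard H Xs ≤ cutCard H C := hmin C hCy hCc hCS
  have hCI : cutCard H C ≤ cutCard H (X ∩ Xs) :=
    cutSet_subset_ncard_le cutSet_reachIn_subset
  -- union
  obtain ⟨s0, hs0⟩ := hSc.1
  have hUc : ConnOn H (X ∪ Xs) := h2.union hXsc ⟨s0, hSsub hs0⟩
  have hUy : y ∉ X ∪ Xs := by
    intro h
    rcases h with h | h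
    · exact h1 h
    · exact hXsy h
  have hUS : S ⊆ X ∪ Xs := fun s hs => Or.inl (h3 hs)
  have hsubm := cut_submodular H X Xs
  have hUmin : cutCard H Xs ≤ cutCard H (X ∪ Xs) := hmin _ hUy hUc hUS
  have hUM : X ∪ Xs ∈ M := ⟨⟨hUy, hUc, hUS⟩, by rw [← hXscard]; omega⟩
  have heq := hXsmax (j := X ∪ Xs) hUM (by exact Set.subset_union_right)
  simp only [id] at heq
  intro z hz
  exact heq (Or.inl hz)


lemma important_superset {H : SimpleGraph W} {x y : W} {S Xs X : Set W}
    (hSc : ConnOn H S)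
    (hXsy : y ∉ Xs) (hXsc : ConnOn H Xs) (hXsS : S ⊆ Xs)
    (hmin : ∀ X' : Set W, y ∉ X' → ConnOn H X' → S ⊆ X' → cutCard H Xs ≤ cutCard H X')
    (hX : ImportantSet H x y X) (hXS : S ⊆ X) : Xs ⊆ X := by
  obtain ⟨hxX, hyX, hXconn, hmax⟩ := hX
  have hXc : ConnOn H X := (connOn_iff H X).2 hXconn
  set C := reachIn H (X ∩ Xs) S with hCdef
  have hSsub : S ⊆ X ∩ Xs := fun s hs => ⟨hXS hs, hXsS hs⟩
  have hCmin : cutCard H Xs ≤ cutCard H C :=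
    hmin C (fun hy => hyX (reachIn_subset hy).1) (reachIn_connOn hSc hSsub)
      (subset_reachIn hSsub)
  have hCI : cutCard H C ≤ cutCard H (X ∩ Xs) :=
    cutSet_subset_ncard_le cutSet_reachIn_subset
  have hsubm := cut_submodular H X Xs
  obtain ⟨s0, hs0⟩ := hSc.1
  have hUc : ConnOn H (X ∪ Xs) := hXc.union hXsc ⟨s0, hSsub hs0⟩
  have hUle : cutCard H (X ∪ Xs) ≤ cutCard H X := by omega
  by_contra hns
  refine hmax ⟨X ∪ Xs, ?_, ?_, (connOn_iff H _).1 hUc, hUle⟩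
  · refine (Set.subset_union_left).ssubset_of_ne ?_
    intro heq
    exact hns (fun z hz => heq ▸ Or.inr hz)
  · intro h
    rcases h with h | h
    · exact hyX h
    · exact hXsy h

lemma star_setup {H : SimpleGraph W} {x y : W} {S : Set W} {p : ℕ}
    (hSc : ConnOn H S)
    (hne : {X : Set W | ImportantSet H x y X ∧ cutCard H X ≤ p ∧ S ⊆ X}.Nonempty) :
    ∃ Xs : Set W, (y ∉ Xs ∧ ConnOn H Xs ∧ S ⊆ Xs) ∧ cutCard H Xs ≤ p ∧
      (∀ X : Set W, y ∉ X → ConnOn H X → S ⊆ X → cutCard H Xs ≤ cutCard H X) ∧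
      (∀ X : Set W, y ∉ X → ConnOn H X → S ⊆ X → cutCard H X ≤ cutCard H Xs → X ⊆ Xs) ∧
      (∀ X ∈ {X : Set W | ImportantSet H x y X ∧ cutCard H X ≤ p ∧ S ⊆ X}, Xs ⊆ X) := by
  obtain ⟨X0, hX0i, hX0p, hX0S⟩ := hne
  have hX0c : ConnOn H X0 := (connOn_iff H X0).2 hX0i.2.2.1
  obtain ⟨Xs, hv, hmin, hmax⟩ := exists_star H y S hSc ⟨X0, hX0i.2.1, hX0c, hX0S⟩
  refine ⟨Xs, hv, le_trans (hmin X0 hX0i.2.1 hX0c hX0S) hX0p, hmin, hmax, ?_⟩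
  rintro X ⟨hXi, hXp, hXS⟩
  exact important_superset hSc hv.1 hv.2.1 hv.2.2 hmin hXi hXS

lemma imp_subset_singleton {H : SimpleGraph W} {x y : W} {S : Set W} {p : ℕ} {Xs : Set W}
    (hXs0 : cutCard H Xs = 0)
    (hcont : ∀ X ∈ {X : Set W | ImportantSet H x y X ∧ cutCard H X ≤ p ∧ S ⊆ X}, Xs ⊆ X)
    (hxXs : x ∈ Xs) :
    {X : Set W | ImportantSet H x y X ∧ cutCard H X ≤ p ∧ S ⊆ X}.ncard ≤ 1 := by
  have hclosed : ∀ a ∈ Xs, ∀ b, H.Adj a b → b ∈ Xs := by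
    intro a ha b hadj
    by_contra hb
    have hmem : s(a, b) ∈ cutSet H Xs := mem_cutSet.2 ⟨hadj, Or.inl ⟨ha, hb⟩⟩
    have h0 : cutSet H Xs = ∅ := by
      rw [cutCard_eq] at hXs0
      exact (Set.ncard_eq_zero (Set.toFinite _)).1 hXs0
    rw [h0] at hmem
    exact hmem
  have hsub : {X : Set W | ImportantSet H x y X ∧ cutCard H X ≤ p ∧ S ⊆ X} ⊆ {Xs} := by
    intro X hX
    have hXsub : Xs ⊆ X := hcont X hX
    have hXc : ConnOn H X := (connOn_iff H X).2 hX.1.2.2.1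
    have hXXs : X ⊆ Xs := by
      intro w hw
      obtain ⟨wk, _⟩ := hXc.2 x (hXsub hxXs) w hw
      exact walk_closed hclosed wk hxXs
    exact Set.mem_singleton_iff.2 (Set.Subset.antisymm hXXs hXsub)
  exact le_trans (Set.ncard_le_ncard hsub (Set.toFinite _)) (by simp)

lemma key_count (μ : ℕ) : ∀ (H : SimpleGraph W) (x y : W) (S : Set W) (p : ℕ),
    x ∈ S → y ∉ S → ConnOn H S →
    (∀ X : Set W, y ∉ X → ConnOn H X → S ⊆ X → 2 * p ≤ μ + cutCard H X) →
    {X : Set W | ImportantSet H x y X ∧ cutCard H X ≤ p ∧ S ⊆ X}.ncard ≤ 2 ^ μ := by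
  induction μ with
  | zero =>
    intro H x y S p hxS hyS hSc hlow
    rcases Set.eq_empty_or_nonempty
      {X : Set W | ImportantSet H x y X ∧ cutCard H X ≤ p ∧ S ⊆ X} with hem | hne
    · rw [hem]; simp
    obtain ⟨Xs, hv, hXsp, hmin, hmax, hcont⟩ := star_setup hSc hne
    have h1 := hlow Xs hv.1 hv.2.1 hv.2.2
    have hXs0 : cutCard H Xs = 0 := by omega
    exact le_trans (imp_subset_singleton hXs0 hcont (hv.2.2 hxS))
      (Nat.one_le_pow _ _ (by norm_num))
  | succ n ih =>
    intro H x y S p hxS hyS hSc hlow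
    rcases Set.eq_empty_or_nonempty
      {X : Set W | ImportantSet H x y X ∧ cutCard H X ≤ p ∧ S ⊆ X} with hem | hne
    · rw [hem]; simp
    obtain ⟨Xs, hv, hXsp, hmin, hmax, hcont⟩ := star_setup hSc hne
    by_cases hXs0 : cutCard H Xs = 0
    · exact le_trans (imp_subset_singleton hXs0 hcont (hv.2.2 hxS))
        (Nat.one_le_pow _ _ (by norm_num))
    · have hcne : (cutSet H Xs).Nonempty := by
        rw [cutCard_eq] at hXs0
        exact Set.nonempty_of_ncard_ne_zero hXs0
      obtain ⟨e, he⟩ := hcne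
      obtain ⟨u, v, hadj, rfl, huXs, hvXs⟩ := mem_cutSet'.1 he
      have hp1 : 1 ≤ p := by omega
      set Imp := {X : Set W | ImportantSet H x y X ∧ cutCard H X ≤ p ∧ S ⊆ X} with hImp
      have hsplit : Imp ⊆ {X ∈ Imp | v ∈ X} ∪ {X ∈ Imp | v ∉ X} := by
        intro X hX
        by_cases hvX : v ∈ X
        · exact Or.inl ⟨hX, hvX⟩
        · exact Or.inr ⟨hX, hvX⟩
      have hb1 : {X ∈ Imp | v ∈ X}.ncard ≤ 2 ^ n := by
        by_cases hvy : v = y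
        · have hemp : {X ∈ Imp | v ∈ X} = ∅ := by
            ext X
            simp only [Set.mem_sep_iff, Set.mem_empty_iff_false, iff_false, not_and]
            intro hX hvX
            subst hvy
            exact hX.1.2.1 hvX
          rw [hemp]; simp
        · have hS'c : ConnOn H (Xs ∪ {v}) := hv.2.1.insert huXs hadj
          have hxS' : x ∈ Xs ∪ {v} := Or.inl (hv.2.2 hxS)
          have hyS' : y ∉ Xs ∪ {v} := by
            intro h
            rcases h with h | h
            · exact hv.1 h
            · exact hvy (Set.mem_singleton_iff.1 h).symm
          have hlow' : ∀ X : Set W, y ∉ X → ConnOn H X → Xs ∪ {v} ⊆ X →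
              2 * p ≤ n + cutCard H X := by
            intro X h1 h2 h3
            have hS_X : S ⊆ X := fun s hs => h3 (Or.inl (hv.2.2 hs))
            have hge : cutCard H Xs ≤ cutCard H X := hmin X h1 h2 hS_X
            have hne2 : cutCard H X ≠ cutCard H Xs := by
              intro heq
              exact hvXs (hmax X h1 h2 hS_X (le_of_eq heq) (h3 (Or.inr rfl)))
            have hl := hlow Xs hv.1 hv.2.1 hv.2.2
            omega
          have hsub : {X ∈ Imp | v ∈ X} ⊆
              {X : Set W | ImportantSet H x y X ∧ cutCard H X ≤ p ∧ Xs ∪ {v} ⊆ X} := by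
            rintro X ⟨hX, hvX⟩
            refine ⟨hX.1, hX.2.1, ?_⟩
            intro z hz
            rcases hz with hz | hz
            · exact hcont X hX hz
            · rw [Set.mem_singleton_iff] at hz
              subst hz
              exact hvX
          exact le_trans (Set.ncard_le_ncard hsub (Set.toFinite _))
            (ih H x y (Xs ∪ {v}) p hxS' hyS' hS'c hlow')
      have hb2 : {X ∈ Imp | v ∉ X}.ncard ≤ 2 ^ n := by
        set H' := H.deleteEdges {s(u, v)} with hH'
        have hle : H' ≤ H := SimpleGraph.deleteEdges_le _
        have hvS : v ∉ S := fun h => hvXs (hv.2.2 h)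
        have hS'c : ConnOn H' S := connOn_deleteEdge hvS hSc
        have hlow' : ∀ X : Set W, y ∉ X → ConnOn H' X → S ⊆ X →
            2 * (p - 1) ≤ n + cutCard H' X := by
          intro X h1 h2 h3
          have h2H : ConnOn H X := h2.mono hle
          have hge : cutCard H Xs ≤ cutCard H X := hmin X h1 h2H h3
          have hd : cutCard H X ≤ cutCard H' X + 1 := cutCard_le_deleteEdges_add_one H _ X
          have hl := hlow Xs hv.1 hv.2.1 hv.2.2
          omega
        have hsub : {X ∈ Imp | v ∉ X} ⊆
            {X : Set W | ImportantSet H' x y X ∧ cutCard H' X ≤ p - 1 ∧ S ⊆ X} := by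
          rintro X ⟨⟨hXi, hXp, hXS⟩, hvX⟩
          have hXc : ConnOn H X := (connOn_iff H X).2 hXi.2.2.1
          have hXsub : Xs ⊆ X := hcont X ⟨hXi, hXp, hXS⟩
          have hecross : s(u, v) ∈ cutSet H X :=
            mem_cutSet.2 ⟨hadj, Or.inl ⟨hXsub huXs, hvX⟩⟩
          have hdeq : cutCard H' X + 1 = cutCard H X := cutCard_deleteEdges_of_mem H hecross
          refine ⟨⟨hXi.1, hXi.2.1, (connOn_iff H' X).1 (connOn_deleteEdge hvX hXc), ?_⟩,
            by omega, hXS⟩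
          rintro ⟨X', hss, hyX', hX'c, hX'card⟩
          have hX'cH : ConnOn H X' := ((connOn_iff H' X').2 hX'c).mono hle
          refine hXi.2.2.2 ⟨X', hss, hyX', (connOn_iff H X').1 hX'cH, ?_⟩
          have hd2 := cutCard_le_deleteEdges_add_one H (s(u, v)) X'
          rw [← hH'] at hd2
          omega
        exact le_trans (Set.ncard_le_ncard hsub (Set.toFinite _))
          (ih H' x y S (p - 1) hxS hyS hS'c hlow')
      have hun := Set.ncard_union_le {X ∈ Imp | v ∈ X} {X ∈ Imp | v ∉ X}
      have hImple := Set.ncard_le_ncard hsplit (Set.toFinite _)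
      rw [pow_succ]
      omega

lemma count_imp (H : SimpleGraph W) (x y : W) (p : ℕ) :
    {X : Set W | ImportantSet H x y X ∧ cutCard H X ≤ p}.ncard ≤ 4 ^ p := by
  by_cases hxy : x = y
  · have : {X : Set W | ImportantSet H x y X ∧ cutCard H X ≤ p} = ∅ := by
      ext X
      simp only [Set.mem_setOf_eq, Set.mem_empty_iff_false, iff_false, not_and]
      intro hX
      exact fun _ => hX.2.1 (hxy ▸ hX.1)
    rw [this]; simp
  · have heq : {X : Set W | ImportantSet H x y X ∧ cutCard H X ≤ p}
        = {X : Set W | ImportantSet H x y X ∧ cutCard H X ≤ p ∧ ({x} : Set W) ⊆ X} := by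
      ext X
      simp only [Set.mem_setOf_eq]
      constructor
      · rintro ⟨h1, h2⟩
        exact ⟨h1, h2, by simpa using h1.1⟩
      · rintro ⟨h1, h2, _⟩
        exact ⟨h1, h2⟩
    rw [heq]
    have h := key_count (2 * p) H x y {x} p rfl (by simpa using Ne.symm hxy)
      (connOn_singleton H x) (fun X _ _ _ => by omega)
    calc {X : Set W | ImportantSet H x y X ∧ cutCard H X ≤ p ∧ ({x} : Set W) ⊆ X}.ncard
        ≤ 2 ^ (2 * p) := h
      _ = 4 ^ p := by rw [pow_mul]; norm_num

end Aux

section Assembly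

lemma ncard_biUnion_le {α β : Type*} [Fintype α] [Fintype β] (S : Set α) (f : α → Set β)
    (m : ℕ) (hf : ∀ a ∈ S, (f a).ncard ≤ m) : (⋃ a ∈ S, f a).ncard ≤ S.ncard * m := by
  classical
  have h1 : (⋃ a ∈ S, f a).toFinset ⊆ S.toFinset.biUnion (fun a => (f a).toFinset) := by
    intro b hb
    rw [Set.mem_toFinset] at hb
    simp only [Set.mem_iUnion] at hb
    obtain ⟨a, ha, hab⟩ := hb
    rw [Finset.mem_biUnion]
    exact ⟨a, Set.mem_toFinset.2 ha, Set.mem_toFinset.2 hab⟩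
  calc (⋃ a ∈ S, f a).ncard = (⋃ a ∈ S, f a).toFinset.card := Set.ncard_eq_toFinset_card' _
    _ ≤ (S.toFinset.biUnion fun a => (f a).toFinset).card := Finset.card_le_card h1
    _ ≤ ∑ a ∈ S.toFinset, (f a).toFinset.card := Finset.card_biUnion_le
    _ ≤ ∑ _a ∈ S.toFinset, m := Finset.sum_le_sum (fun a ha => by
        rw [← Set.ncard_eq_toFinset_card']
        exact hf a (Set.mem_toFinset.1 ha))
    _ = S.ncard * m := by
        rw [Finset.sum_const, smul_eq_mul, ← Set.ncard_eq_toFinset_card']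

lemma addApex_adj_some_some {G : SimpleGraph V} {Y : Set V} {a b : V} (h : G.Adj a b) :
    (addApex G Y).Adj (some a) (some b) := by
  rw [addApex, SimpleGraph.fromRel_adj]
  exact ⟨by simpa using h.ne, Or.inl (Or.inl ⟨a, b, rfl, rfl, h⟩)⟩

lemma addApex_adj_some_none {G : SimpleGraph V} {Y : Set V} {v : V} (h : v ∈ Y) :
    (addApex G Y).Adj (some v) none := by
  rw [addApex, SimpleGraph.fromRel_adj]
  exact ⟨by simp, Or.inl (Or.inr ⟨v, rfl, rfl, h⟩)⟩

end Assembly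

/-- `d_{G*}(Z) ≤ (4k²)·t·4^(4k²)` (hence also `d_G(Z) ≤ (4k²)·t·4^(4k²)`) and
`|Z ∩ Y| ≤ (4k²)·t·4^(4k²)`. -/
theorem stmt14 {V : Type*} [Fintype V] (G : SimpleGraph V) (k t : ℕ)
    (T1 T2 : Set V) (hdisj : Disjoint T1 T2)
    (ht : Nat.card T1 + Nat.card T2 ≤ t) (Y : Set V) :
    cutCard (addApex G Y) (importantUnion G Y (T1 ∪ T2) (4 * k ^ 2))
        ≤ (4 * k ^ 2) * t * 4 ^ (4 * k ^ 2) ∧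
    cutCard G {v : V | some v ∈ importantUnion G Y (T1 ∪ T2) (4 * k ^ 2)}
        ≤ (4 * k ^ 2) * t * 4 ^ (4 * k ^ 2) ∧
    Nat.card {v : V | some v ∈ importantUnion G Y (T1 ∪ T2) (4 * k ^ 2) ∧ v ∈ Y}
        ≤ (4 * k ^ 2) * t * 4 ^ (4 * k ^ 2) := by
  classical
  set p := 4 * k ^ 2 with hp
  set GS := addApex G Y with hGS
  set Z := importantUnion G Y (T1 ∪ T2) p with hZdef
  set F : Set (Set (Option V)) := ⋃ x ∈ T1 ∪ T2,
    {X : Set (Option V) | ImportantSet GS (some x) none X ∧ cutCard GS X ≤ p} with hF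
  have hZ_eq : ∀ w, w ∈ Z ↔ ∃ X ∈ F, w ∈ X := by
    intro w
    simp only [hZdef, importantUnion, Set.mem_setOf_eq, hF, Set.mem_iUnion,
      Set.mem_setOf_eq]
    constructor
    · rintro ⟨x, hx, X, h1, h2, h3⟩
      exact ⟨X, ⟨x, hx, h1, h2⟩, h3⟩
    · rintro ⟨X, ⟨x, hx, h1, h2⟩, h3⟩
      exact ⟨x, hx, X, h1, h2, h3⟩
  have hFcut : ∀ X ∈ F, cutCard GS X ≤ p := by
    intro X hX
    simp only [hF, Set.mem_iUnion, Set.mem_setOf_eq] at hX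
    obtain ⟨x, _, _, h2⟩ := hX
    exact h2
  have hFnone : ∀ X ∈ F, (none : Option V) ∉ X := by
    intro X hX
    simp only [hF, Set.mem_iUnion, Set.mem_setOf_eq] at hX
    obtain ⟨x, _, h1, _⟩ := hX
    exact h1.2.1
  have hTcard : (T1 ∪ T2).ncard ≤ t := by
    rw [Nat.card_coe_set_eq, Nat.card_coe_set_eq] at ht
    exact le_trans (Set.ncard_union_le T1 T2) ht
  have hFcard : F.ncard ≤ t * 4 ^ p := by
    calc F.ncard ≤ (T1 ∪ T2).ncard * 4 ^ p :=
          ncard_biUnion_le _ _ _ (fun x _ => count_imp GS (some x) none p)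
      _ ≤ t * 4 ^ p := Nat.mul_le_mul_right _ hTcard
  have hcutsub : cutSet GS Z ⊆ ⋃ X ∈ F, cutSet GS X := by
    intro e he
    rw [mem_cutSet'] at he
    obtain ⟨a, b, hadj, rfl, ha, hb⟩ := he
    obtain ⟨X, hXF, haX⟩ := (hZ_eq a).1 ha
    have hbX : b ∉ X := fun h => hb ((hZ_eq b).2 ⟨X, hXF, h⟩)
    exact Set.mem_biUnion hXF (mem_cutSet'.2 ⟨a, b, hadj, rfl, haX, hbX⟩)
  have hG1 : cutCard GS Z ≤ p * t * 4 ^ p := by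
    rw [cutCard_eq]
    calc (cutSet GS Z).ncard ≤ (⋃ X ∈ F, cutSet GS X).ncard :=
          Set.ncard_le_ncard hcutsub (Set.toFinite _)
      _ ≤ F.ncard * p := ncard_biUnion_le F _ p (fun X hX => by
          rw [← cutCard_eq]
          exact hFcut X hX)
      _ ≤ (t * 4 ^ p) * p := Nat.mul_le_mul_right _ hFcard
      _ = p * t * 4 ^ p := by ring
  refine ⟨hG1, ?_, ?_⟩
  · -- cut in G
    have hsub2 : Sym2.map some '' (cutSet G {v : V | some v ∈ Z}) ⊆ cutSet GS Z := by
      rintro _ ⟨e, he, rfl⟩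
      rw [mem_cutSet'] at he
      obtain ⟨a, b, hadj, rfl, ha, hb⟩ := he
      exact mem_cutSet'.2 ⟨some a, some b, addApex_adj_some_some hadj, rfl, ha, hb⟩
    have hinj : Function.Injective (Sym2.map (some : V → Option V)) :=
      Sym2.map.injective (Option.some_injective V)
    calc cutCard G {v : V | some v ∈ Z}
        = (Sym2.map some '' (cutSet G {v : V | some v ∈ Z})).ncard := by
          rw [cutCard_eq, Set.ncard_image_of_injective _ hinj]
      _ ≤ (cutSet GS Z).ncard := Set.ncard_le_ncard hsub2 (Set.toFinite _)
      _ = cutCard GS Z := (cutCard_eq _ _).symm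
      _ ≤ p * t * 4 ^ p := hG1
  · -- |Z ∩ Y|
    have hnone : (none : Option V) ∉ Z := by
      intro h
      obtain ⟨X, hXF, hX⟩ := (hZ_eq none).1 h
      exact hFnone X hXF hX
    set A := {v : V | some v ∈ Z ∧ v ∈ Y} with hA
    have hsub3 : (fun v : V => s(some v, (none : Option V))) '' A ⊆ cutSet GS Z := by
      rintro _ ⟨v, hv, rfl⟩
      exact mem_cutSet'.2 ⟨some v, none, addApex_adj_some_none hv.2, rfl, hv.1, hnone⟩
    have hinj : Function.Injective (fun v : V => s(some v, (none : Option V))) := by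
      intro a b h
      simp only [Sym2.eq_iff] at h
      rcases h with ⟨h1, _⟩ | ⟨h1, h2⟩
      · exact Option.some_injective V h1
      · exact absurd h1 (by simp)
    calc Nat.card A = A.ncard := Nat.card_coe_set_eq A
      _ = ((fun v : V => s(some v, (none : Option V))) '' A).ncard := by
          rw [Set.ncard_image_of_injective _ hinj]
      _ ≤ (cutSet GS Z).ncard := Set.ncard_le_ncard hsub3 (Set.toFinite _)
      _ = cutCard GS Z := (cutCard_eq _ _).symm
      _ ≤ p * t * 4 ^ p := hG1
end
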